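/- arXiv:math/9806062 — 4 statements merged into one kernel-verified Lean document; each statement's English description precedes it below -/
import Mathlib

section
/- Let (K, π, τ_K) be a real coisotropic quantum left subgroup of F and let a ∈ B_π := {a ∈ F : (π⊗id)(Δa) = π(1)⊗a}. Then π(a*) = conj(ε(a))·π(1) = ε(a*)·π(1). -/
open scoped TensorProduct
open Coalgebra

noncomputable section

variable {F : Type*} [Ring F] [HopfAlgebra ℂ F] [StarRing F] [StarModule ℂ F]
variable {K : Type*} [AddCommGroup K] [Module ℂ K] [Coalgebra ℂ K]

/-- The left quantum homogeneous space `B_π = {a | (π ⊗ id)(Δ a) = π(1) ⊗ a}`,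
as a subspace of `F`. -/
def Bpi (π : F →ₗ[ℂ] K) : Submodule ℂ F :=
  LinearMap.ker ((LinearMap.rTensor F π ∘ₗ Coalgebra.comul) - TensorProduct.mk ℂ K F (π 1))

/-- For a real coisotropic quantum left subgroup `(K, π, τ_K)` of `F` and `a ∈ B_π`,
one has `π(a*) = conj(ε(a)) π(1) = ε(a*) π(1)`. -/
theorem statement3
    (hcomul_star : ∀ (a : F) {ι : Type*} (r : Coalgebra.Repr ℂ a ι),
      Coalgebra.comul (star a) = ∑ i ∈ r.index, star (r.left i) ⊗ₜ[ℂ] star (r.right i))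
    (hcounit_star : ∀ a : F, (Coalgebra.counit (star a) : ℂ) = starRingEnd ℂ (Coalgebra.counit a))
    (hSbij : Function.Bijective (HopfAlgebra.antipode (R := ℂ) (A := F)))
    (π : F →ₗ[ℂ] K) (hπsurj : Function.Surjective π)
    (hπcomul : ∀ a : F, Coalgebra.comul (π a) = TensorProduct.map π π (Coalgebra.comul a))
    (hπcounit : ∀ a : F, (Coalgebra.counit (π a) : ℂ) = (Coalgebra.counit a : ℂ))
    (act : F →ₗ[ℂ] K →ₗ[ℂ] K)
    (hact_one : ∀ k : K, act 1 k = k)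
    (hact_mul : ∀ (a b : F) (k : K), act (a * b) k = act a (act b k))
    (hact_π : ∀ a b : F, act a (π b) = π (a * b))
    (τK : K → K)
    (hτK_add : ∀ x y : K, τK (x + y) = τK x + τK y)
    (hτK_smul : ∀ (c : ℂ) (x : K), τK (c • x) = (starRingEnd ℂ) c • τK x)
    (hτK_π : ∀ a : F, τK (π a) = π (star (HopfAlgebra.antipode (R := ℂ) a)))
    (Sinv : F →ₗ[ℂ] F)
    (hSinv₁ : ∀ a : F, Sinv (HopfAlgebra.antipode (R := ℂ) a) = a)
    (hSinv₂ : ∀ a : F, HopfAlgebra.antipode (R := ℂ) (Sinv a) = a)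
    (a : F) (ha : a ∈ Bpi π) :
    π (star a) = (starRingEnd ℂ) (Coalgebra.counit a) • π 1 ∧
    π (star a) = (Coalgebra.counit (star a) : ℂ) • π 1 := by
  classical
  have hτK0 : τK 0 = 0 := by
    have h := hτK_smul 0 0
    simpa using h
  have hS1 : HopfAlgebra.antipode (R := ℂ) (1 : F) = 1 := by
    have h := HopfAlgebra.mul_antipode_rTensor_comul_apply (R := ℂ) (1 : F)
    simpa [Bialgebra.comul_one, Algebra.TensorProduct.one_def] using h
  -- the conjugate-bilinear map (k, b) ↦ act (star b) (τK k), as an AddMonoidHom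
  set Φ : K →+ F →+ K :=
    { toFun := fun k =>
        { toFun := fun b => act (star b) (τK k)
          map_zero' := by simp
          map_add' := fun b c => by simp [star_add] }
      map_zero' := by ext b; simp [hτK0]
      map_add' := fun x y => by ext b; simp [hτK_add] } with hΦdef
  have hΦ : ∀ (c : ℂ) (k : K) (b : F), Φ (c • k) b = Φ k (c • b) := fun c k b => by
    simp only [hΦdef, AddMonoidHom.coe_mk, ZeroHom.coe_mk, hτK_smul, star_smul,
      starRingEnd_apply, map_smul, LinearMap.smul_apply]
  set Θ : K ⊗[ℂ] F →+ K := TensorProduct.liftAddHom Φ hΦ with hΘdef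
  have hBpi : (LinearMap.rTensor F π) (Coalgebra.comul a) = π 1 ⊗ₜ[ℂ] a := by
    have h := ha
    simp only [Bpi, LinearMap.mem_ker, LinearMap.sub_apply, LinearMap.coe_comp,
      Function.comp_apply, TensorProduct.mk_apply, sub_eq_zero] at h
    exact h
  set r := Coalgebra.Repr.arbitrary ℂ a with hr
  have htens : ∑ i ∈ r.index, π (r.left i) ⊗ₜ[ℂ] r.right i = π 1 ⊗ₜ[ℂ] a := by
    rw [← hBpi, ← r.eq, map_sum]
    simp [LinearMap.rTensor_tmul]
  have happ : ∑ i ∈ r.index, act (star (r.right i)) (τK (π (r.left i)))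
      = act (star a) (τK (π 1)) := by
    have h := congrArg Θ htens
    rw [map_sum] at h
    simpa only [hΘdef, TensorProduct.liftAddHom_tmul, hΦdef, AddMonoidHom.coe_mk,
      ZeroHom.coe_mk] using h
  have key : π (star a) = (starRingEnd ℂ) (Coalgebra.counit a) • π 1 := by
    calc π (star a) = act (star a) (τK (π 1)) := by
          rw [hτK_π, hS1, star_one, hact_π, mul_one]
      _ = ∑ i ∈ r.index, act (star (r.right i)) (τK (π (r.left i))) := happ.symm
      _ = ∑ i ∈ r.index,
            π (star (HopfAlgebra.antipode (R := ℂ) (r.left i) * r.right i)) := by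
          refine Finset.sum_congr rfl fun i _ => ?_
          rw [hτK_π, hact_π, ← star_mul]
      _ = π (star (∑ i ∈ r.index,
            HopfAlgebra.antipode (R := ℂ) (r.left i) * r.right i)) := by
          rw [star_sum, map_sum]
      _ = (starRingEnd ℂ) (Coalgebra.counit a) • π 1 := by
          rw [HopfAlgebra.sum_antipode_mul_eq_algebraMap_counit, Algebra.algebraMap_eq_smul_one, star_smul,
            star_one, map_smul, starRingEnd_apply]
  exact ⟨key, by rw [hcounit_star]; exact key⟩
end
end

section
/- Let h : B_π → ℂ be a real functional, quasi-invariant with weight φ, and let k ∈ U be group-like (Δ_U(k) = k⊗k, ε_U(k) = 1) with τ_U(k) = k, where τ_U := *∘S_U. Then the translated functional h_k(a) := h(k.a) is a real functional, satisfies h_k(a) = h(φ[k*]* a φ[k*]) for all a ∈ B_π (so h_k is ξ-equivalent to h with ξ = φ[k*] whenever φ[k*] is invertible in B_π), is quasi-invariant with weight φ_k[X] := φ[X S_U(k)] (S_U(k).φ[k]), and is positive whenever h is positive (h positive means h(a*a) ≥ 0 for all a ∈ B_π). -/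
open scoped TensorProduct
open Coalgebra

noncomputable section
open scoped ComplexOrder

variable {F : Type*} [Ring F] [HopfAlgebra ℂ F] [StarRing F] [StarModule ℂ F]
variable {K : Type*} [AddCommGroup K] [Module ℂ K] [Coalgebra ℂ K]
variable {U : Type*} [Ring U] [HopfAlgebra ℂ U] [StarRing U] [StarModule ℂ U]

/-- The left regular representation of `U` on `F`: `X.a = Σ a₍₁₎ ⟨X, a₍₂₎⟩`. -/
def lreg (p : U →ₗ[ℂ] F →ₗ[ℂ] ℂ) (X : U) : F →ₗ[ℂ] F :=
  (TensorProduct.rid ℂ F).toLinearMap ∘ₗ LinearMap.lTensor F (p X) ∘ₗ Coalgebra.comul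

/-- `h` is quasi-invariant with weight `φ`:
`h(X.a) = Σ h(φ[X₍₁₎*]* ⬝ a ⬝ φ[S(X₍₂₎)])` for all `a ∈ B_π`. -/
def QuasiInvL (π : F →ₗ[ℂ] K) (p : U →ₗ[ℂ] F →ₗ[ℂ] ℂ)
    (h : F →ₗ[ℂ] ℂ) (φ : U →ₗ[ℂ] F) : Prop :=
  ∀ X : U, ∀ a ∈ Bpi π, ∀ {ι : Type} (r : Coalgebra.Repr ℂ X ι),
    h (lreg p X a) = ∑ i ∈ r.index,
      h (star (φ (star (r.left i))) * a * φ (HopfAlgebra.antipode (R := ℂ) (r.right i)))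


set_option linter.unusedSectionVars false
set_option maxHeartbeats 1000000

section AuxHopf
variable {A : Type*} [Ring A] [HopfAlgebra ℂ A]

local notation "Sm" => HopfAlgebra.antipode (R := ℂ)

/-- A singleton representation for a group-like element, with index type in an
arbitrary universe. -/
def reprSingle.{w} (k : A) (hk : Coalgebra.comul k = k ⊗ₜ[ℂ] k) :
    Coalgebra.Repr ℂ k PUnit.{w + 1} where
  index := Finset.univ
  left _ := k
  right _ := k
  eq := by simp [hk]

/-- A product representation. -/
def reprMul' {ι κ : Type*} {x y : A} (rx : Coalgebra.Repr ℂ x ι) (ry : Coalgebra.Repr ℂ y κ) :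
    Coalgebra.Repr ℂ (x * y) (ι × κ) where
  index := rx.index ×ˢ ry.index
  left i := rx.left i.1 * ry.left i.2
  right i := rx.right i.1 * ry.right i.2
  eq := by
    rw [Bialgebra.comul_mul, ← rx.eq, ← ry.eq, Finset.sum_mul_sum, Finset.sum_product]
    simp [Algebra.TensorProduct.tmul_mul_tmul]

/-- A representation with index type in an arbitrary universe. -/
def reprU.{w} {B : Type*} [AddCommMonoid B] [Module ℂ B] [CoalgebraStruct ℂ B] (a : B) :
    Coalgebra.Repr ℂ a (ULift.{w} (Fin (ℛ ℂ a).index.card)) :=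
  let r := ℛ ℂ a
  { index := Finset.univ
    left := fun i => r.left (r.index.equivFin.symm i.down)
    right := fun i => r.right (r.index.equivFin.symm i.down)
    eq := by
      rw [← r.eq]
      calc ∑ i : ULift.{w} (Fin r.index.card),
            r.left (r.index.equivFin.symm i.down) ⊗ₜ[ℂ] r.right (r.index.equivFin.symm i.down)
          = ∑ x ∈ r.index.attach, r.left ↑x ⊗ₜ[ℂ] r.right ↑x := by
            refine Finset.sum_equiv (Equiv.ulift.trans r.index.equivFin.symm)
              (fun i => ?_) (fun i _ => ?_)
            · simp [Finset.mem_attach]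
            · rfl
        _ = ∑ i ∈ r.index, r.left i ⊗ₜ[ℂ] r.right i :=
            Finset.sum_attach r.index (fun i => r.left i ⊗ₜ[ℂ] r.right i) }

lemma exchange_map {M : Type*} [AddCommGroup M] [Module ℂ M]
    {ι : Type*} {κ Λ : ι → Type*}
    {a : A} (r : Coalgebra.Repr ℂ a ι) (rL : ∀ i, Coalgebra.Repr ℂ (r.left i) (κ i))
    (rR : ∀ i, Coalgebra.Repr ℂ (r.right i) (Λ i)) (G : A ⊗[ℂ] (A ⊗[ℂ] A) →ₗ[ℂ] M) :
    ∑ i ∈ r.index, ∑ j ∈ (rL i).index,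
        G ((rL i).left j ⊗ₜ[ℂ] ((rL i).right j ⊗ₜ[ℂ] r.right i)) =
    ∑ i ∈ r.index, ∑ j ∈ (rR i).index,
        G (r.left i ⊗ₜ[ℂ] ((rR i).left j ⊗ₜ[ℂ] (rR i).right j)) := by
  have h := congrArg G (Coalgebra.sum_tmul_tmul_eq (R := ℂ) r rL rR)
  simpa only [map_sum] using h

lemma pair_mul_antipode {ι κ : Type*} (u v : A) (ru : Coalgebra.Repr ℂ u ι)
    (rv : Coalgebra.Repr ℂ v κ) :
    ∑ i ∈ ru.index, ∑ j ∈ rv.index,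
      (ru.left i * rv.left j) * HopfAlgebra.antipode (R := ℂ) (ru.right i * rv.right j)
      = ((Coalgebra.counit u : ℂ) * (Coalgebra.counit v : ℂ)) • 1 := by
  have h : ∑ i ∈ ru.index ×ˢ rv.index,
      (ru.left i.1 * rv.left i.2) * HopfAlgebra.antipode (R := ℂ) (ru.right i.1 * rv.right i.2)
      = (Coalgebra.counit (u * v) : ℂ) • (1 : A) :=
    HopfAlgebra.sum_mul_antipode_eq_smul (R := ℂ) (reprMul' ru rv)
  rw [Finset.sum_product] at h
  simpa using h

lemma sum_counit_smul_right' {ι : Type*} {a : A} (r : Coalgebra.Repr ℂ a ι) :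
    ∑ i ∈ r.index, (Coalgebra.counit (r.left i) : ℂ) • r.right i = a := by
  have h := Coalgebra.sum_counit_tmul_eq (R := ℂ) r
  apply_fun TensorProduct.lid ℂ A at h
  rw [map_sum] at h
  simp only [TensorProduct.lid_tmul, one_smul] at h
  exact h

lemma sum_counit_smul_left' {ι : Type*} {a : A} (r : Coalgebra.Repr ℂ a ι) :
    ∑ i ∈ r.index, (Coalgebra.counit (r.right i) : ℂ) • r.left i = a := by
  have h := Coalgebra.sum_tmul_counit_eq (R := ℂ) r
  apply_fun TensorProduct.rid ℂ A at h
  rw [map_sum] at h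
  simp only [TensorProduct.rid_tmul, one_smul] at h
  exact h

lemma antipode_one' : HopfAlgebra.antipode (R := ℂ) (1 : A) = 1 := by
  have h := HopfAlgebra.mul_antipode_lTensor_comul_apply (R := ℂ) (A := A) 1
  simpa [Algebra.TensorProduct.one_def] using h

/-- Trilinear multiplication helper. -/
def tri (f g h : A →ₗ[ℂ] A) : A ⊗[ℂ] (A ⊗[ℂ] A) →ₗ[ℂ] A :=
  LinearMap.mul' ℂ A ∘ₗ LinearMap.lTensor A (LinearMap.mul' ℂ A) ∘ₗ
    TensorProduct.map f (TensorProduct.map g h)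

@[simp] lemma tri_apply (f g h : A →ₗ[ℂ] A) (x y z : A) :
    tri f g h (x ⊗ₜ[ℂ] (y ⊗ₜ[ℂ] z)) = f x * (g y * h z) := by
  simp [tri]

lemma antipode_mul' (x y : A) : Sm (x * y) = Sm y * Sm x := by
  have rx : Coalgebra.Repr ℂ x (A × A) := ℛ ℂ x
  have ry : Coalgebra.Repr ℂ y (A × A) := ℛ ℂ y
  have rx2 : ∀ i, Coalgebra.Repr ℂ (rx.right i) (A × A) := fun i => ℛ ℂ _
  have rxL : ∀ i, Coalgebra.Repr ℂ (rx.left i) (A × A) := fun i => ℛ ℂ _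
  have ry2 : ∀ j, Coalgebra.Repr ℂ (ry.right j) (A × A) := fun j => ℛ ℂ _
  have ryL : ∀ j, Coalgebra.Repr ℂ (ry.left j) (A × A) := fun j => ℛ ℂ _
  have claim1 : (∑ j ∈ ry.index, ∑ j' ∈ (ry2 j).index, ∑ i ∈ rx.index, ∑ i' ∈ (rx2 i).index,
      (Sm (ry.left j) * Sm (rx.left i)) *
        (((rx2 i).left i' * (ry2 j).left j') * Sm ((rx2 i).right i' * (ry2 j).right j')))
      = Sm y * Sm x := by
    have hy : ∑ j ∈ ry.index, (Coalgebra.counit (ry.right j) : ℂ) • Sm (ry.left j) = Sm y := by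
      conv_rhs => rw [← sum_counit_smul_left' ry]
      rw [map_sum]
      simp only [map_smul]
    have hx : ∑ i ∈ rx.index, (Coalgebra.counit (rx.right i) : ℂ) • Sm (rx.left i) = Sm x := by
      conv_rhs => rw [← sum_counit_smul_left' rx]
      rw [map_sum]
      simp only [map_smul]
    have step : ∀ j ∈ ry.index,
        (∑ j' ∈ (ry2 j).index, ∑ i ∈ rx.index, ∑ i' ∈ (rx2 i).index,
          (Sm (ry.left j) * Sm (rx.left i)) *
            (((rx2 i).left i' * (ry2 j).left j') * Sm ((rx2 i).right i' * (ry2 j).right j')))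
        = ∑ i ∈ rx.index,
            ((Coalgebra.counit (rx.right i) : ℂ) * (Coalgebra.counit (ry.right j) : ℂ)) •
              (Sm (ry.left j) * Sm (rx.left i)) := by
      intro j _
      rw [Finset.sum_comm]
      refine Finset.sum_congr rfl fun i _ => ?_
      rw [Finset.sum_comm]
      simp only [← Finset.mul_sum]
      rw [pair_mul_antipode _ _ (rx2 i) (ry2 j), mul_smul_comm, mul_one]
    rw [Finset.sum_congr rfl step, ← hy, ← hx, Finset.sum_mul_sum]
    refine Finset.sum_congr rfl fun j _ => Finset.sum_congr rfl fun i _ => ?_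
    simp [smul_mul_assoc, mul_smul_comm, smul_smul, mul_comm]
  have claim2 : (∑ j ∈ ry.index, ∑ j' ∈ (ry2 j).index, ∑ i ∈ rx.index, ∑ i' ∈ (rx2 i).index,
      (Sm (ry.left j) * Sm (rx.left i)) *
        (((rx2 i).left i' * (ry2 j).left j') * Sm ((rx2 i).right i' * (ry2 j).right j')))
      = Sm (x * y) := by
    have hstep1 : ∀ j ∈ ry.index, ∀ j' ∈ (ry2 j).index,
        (∑ i ∈ rx.index, ∑ i' ∈ (rx2 i).index,
          (Sm (ry.left j) * Sm (rx.left i)) *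
            (((rx2 i).left i' * (ry2 j).left j') * Sm ((rx2 i).right i' * (ry2 j).right j')))
        = ∑ i ∈ rx.index, ∑ i' ∈ (rxL i).index,
          (Sm (ry.left j) * Sm ((rxL i).left i')) *
            (((rxL i).right i' * (ry2 j).left j') * Sm (rx.right i * (ry2 j).right j')) := by
      intro j _ j' _
      have h := exchange_map rx rxL rx2
        (tri (LinearMap.mulLeft ℂ (Sm (ry.left j)) ∘ₗ HopfAlgebra.antipode (R := ℂ))
             (LinearMap.mulRight ℂ ((ry2 j).left j'))
             (HopfAlgebra.antipode (R := ℂ) ∘ₗ LinearMap.mulRight ℂ ((ry2 j).right j')))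
      simp only [tri_apply, LinearMap.comp_apply, LinearMap.mulLeft_apply,
        LinearMap.mulRight_apply] at h
      exact h.symm
    calc (∑ j ∈ ry.index, ∑ j' ∈ (ry2 j).index, ∑ i ∈ rx.index, ∑ i' ∈ (rx2 i).index,
          (Sm (ry.left j) * Sm (rx.left i)) *
            (((rx2 i).left i' * (ry2 j).left j') * Sm ((rx2 i).right i' * (ry2 j).right j')))
        = ∑ j ∈ ry.index, ∑ j' ∈ (ry2 j).index, ∑ i ∈ rx.index, ∑ i' ∈ (rxL i).index,
          (Sm (ry.left j) * Sm ((rxL i).left i')) *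
            (((rxL i).right i' * (ry2 j).left j') * Sm (rx.right i * (ry2 j).right j')) :=
          Finset.sum_congr rfl fun j hj => Finset.sum_congr rfl fun j' hj' => hstep1 j hj j' hj'
      _ = ∑ j ∈ ry.index, ∑ j' ∈ (ry2 j).index,
            Sm (ry.left j) * ((ry2 j).left j' * Sm (x * (ry2 j).right j')) := by
          refine Finset.sum_congr rfl fun j hj => Finset.sum_congr rfl fun j' hj' => ?_
          have inner : ∀ i ∈ rx.index,
              (∑ i' ∈ (rxL i).index, (Sm (ry.left j) * Sm ((rxL i).left i')) *
                (((rxL i).right i' * (ry2 j).left j') * Sm (rx.right i * (ry2 j).right j')))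
              = (Coalgebra.counit (rx.left i) : ℂ) •
                  (Sm (ry.left j) * ((ry2 j).left j' * Sm (rx.right i * (ry2 j).right j'))) := by
            intro i _
            have hcol := HopfAlgebra.sum_antipode_mul_eq_smul (R := ℂ) (rxL i)
            calc (∑ i' ∈ (rxL i).index, (Sm (ry.left j) * Sm ((rxL i).left i')) *
                    (((rxL i).right i' * (ry2 j).left j') * Sm (rx.right i * (ry2 j).right j')))
                = ∑ i' ∈ (rxL i).index, Sm (ry.left j) *
                    ((Sm ((rxL i).left i') * (rxL i).right i') *
                      ((ry2 j).left j' * Sm (rx.right i * (ry2 j).right j'))) := by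
                  refine Finset.sum_congr rfl fun i' _ => ?_
                  simp only [mul_assoc]
              _ = Sm (ry.left j) *
                    ((∑ i' ∈ (rxL i).index, Sm ((rxL i).left i') * (rxL i).right i') *
                      ((ry2 j).left j' * Sm (rx.right i * (ry2 j).right j'))) := by
                  rw [← Finset.mul_sum, ← Finset.sum_mul]
              _ = (Coalgebra.counit (rx.left i) : ℂ) •
                    (Sm (ry.left j) * ((ry2 j).left j' * Sm (rx.right i * (ry2 j).right j'))) := by
                  rw [hcol]
                  simp [smul_mul_assoc, mul_smul_comm]
          rw [Finset.sum_congr rfl inner]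
          have hre := sum_counit_smul_right' rx
          calc (∑ i ∈ rx.index, (Coalgebra.counit (rx.left i) : ℂ) •
                  (Sm (ry.left j) * ((ry2 j).left j' * Sm (rx.right i * (ry2 j).right j'))))
              = Sm (ry.left j) * ((ry2 j).left j' *
                  Sm ((∑ i ∈ rx.index, (Coalgebra.counit (rx.left i) : ℂ) • rx.right i) *
                    (ry2 j).right j')) := by
                simp only [Finset.sum_mul, smul_mul_assoc, map_sum, map_smul, Finset.mul_sum,
                  mul_smul_comm]
            _ = Sm (ry.left j) * ((ry2 j).left j' * Sm (x * (ry2 j).right j')) := by rw [hre]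
      _ = ∑ j ∈ ry.index, ∑ j' ∈ (ryL j).index,
            Sm ((ryL j).left j') * ((ryL j).right j' * Sm (x * ry.right j)) := by
          have h := exchange_map ry ryL ry2
            (tri (HopfAlgebra.antipode (R := ℂ)) LinearMap.id
              (HopfAlgebra.antipode (R := ℂ) ∘ₗ LinearMap.mulLeft ℂ x))
          simp only [tri_apply, LinearMap.comp_apply, LinearMap.id_coe, id_eq,
            LinearMap.mulLeft_apply] at h
          exact h.symm
      _ = ∑ j ∈ ry.index, (Coalgebra.counit (ry.left j) : ℂ) • Sm (x * ry.right j) := by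
          refine Finset.sum_congr rfl fun j _ => ?_
          calc (∑ j' ∈ (ryL j).index,
                  Sm ((ryL j).left j') * ((ryL j).right j' * Sm (x * ry.right j)))
              = (∑ j' ∈ (ryL j).index, Sm ((ryL j).left j') * (ryL j).right j') *
                  Sm (x * ry.right j) := by
                rw [Finset.sum_mul]
                refine Finset.sum_congr rfl fun j' _ => ?_
                rw [mul_assoc]
            _ = (Coalgebra.counit (ry.left j) : ℂ) • Sm (x * ry.right j) := by
                rw [HopfAlgebra.sum_antipode_mul_eq_smul (R := ℂ) (ryL j)]
                simp [smul_mul_assoc]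
      _ = Sm (x * y) := by
          have hre := sum_counit_smul_right' ry
          calc (∑ j ∈ ry.index, (Coalgebra.counit (ry.left j) : ℂ) • Sm (x * ry.right j))
              = Sm (x * (∑ j ∈ ry.index, (Coalgebra.counit (ry.left j) : ℂ) • ry.right j)) := by
                simp only [Finset.mul_sum, map_sum, map_smul, mul_smul_comm]
            _ = Sm (x * y) := by rw [hre]
  rw [← claim2, claim1]

lemma sum_sinv_mul (hSbij : Function.Bijective (HopfAlgebra.antipode (R := ℂ) (A := A)))
    {ι : Type*} {a : A} (r : Coalgebra.Repr ℂ a ι) :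
    ∑ i ∈ r.index,
      (LinearEquiv.ofBijective _ hSbij).symm (r.right i) * r.left i
      = (Coalgebra.counit a : ℂ) • 1 := by
  apply hSbij.injective
  show HopfAlgebra.antipode (R := ℂ) _ = HopfAlgebra.antipode (R := ℂ) _
  rw [map_sum, map_smul, antipode_one']
  calc ∑ i ∈ r.index, HopfAlgebra.antipode (R := ℂ)
        ((LinearEquiv.ofBijective _ hSbij).symm (r.right i) * r.left i)
      = ∑ i ∈ r.index, HopfAlgebra.antipode (R := ℂ) (r.left i) * r.right i := by
        refine Finset.sum_congr rfl fun i _ => ?_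
        rw [antipode_mul']
        congr 1
        exact (LinearEquiv.ofBijective _ hSbij).apply_symm_apply (r.right i)
    _ = (Coalgebra.counit a : ℂ) • 1 := HopfAlgebra.sum_antipode_mul_eq_smul (R := ℂ) r

end AuxHopf

section AuxBpi

lemma mem_Bpi {π : F →ₗ[ℂ] K} {a : F} :
    a ∈ Bpi π ↔ LinearMap.rTensor F π (Coalgebra.comul a) = π 1 ⊗ₜ[ℂ] a := by
  simp [Bpi, LinearMap.mem_ker, LinearMap.sub_apply, sub_eq_zero]

lemma Bpi_apply {M : Type*} [AddCommGroup M] [Module ℂ M] {π : F →ₗ[ℂ] K} {a : F}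
    {ι : Type*} (ha : a ∈ Bpi π) (r : Coalgebra.Repr ℂ a ι) (G : K ⊗[ℂ] F →ₗ[ℂ] M) :
    ∑ i ∈ r.index, G (π (r.left i) ⊗ₜ[ℂ] r.right i) = G (π 1 ⊗ₜ[ℂ] a) := by
  have h1 : ∑ i ∈ r.index, π (r.left i) ⊗ₜ[ℂ] r.right i
      = LinearMap.rTensor F π (Coalgebra.comul a) := by
    rw [← r.eq, map_sum]
    simp
  rw [← map_sum, h1, mem_Bpi.mp ha]

lemma lreg_repr (p : U →ₗ[ℂ] F →ₗ[ℂ] ℂ) (X : U) {ι : Type*} {a : F} (r : Coalgebra.Repr ℂ a ι) :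
    lreg p X a = ∑ i ∈ r.index, p X (r.right i) • r.left i := by
  rw [lreg, LinearMap.comp_apply, LinearMap.comp_apply, ← r.eq, map_sum, map_sum]
  simp [TensorProduct.rid_tmul]

lemma Bpi_mul_mem {π : F →ₗ[ℂ] K} (act : F →ₗ[ℂ] K →ₗ[ℂ] K)
    (hact_π : ∀ a b : F, act a (π b) = π (a * b)) {a b : F}
    (ha : a ∈ Bpi π) (hb : b ∈ Bpi π) : a * b ∈ Bpi π := by
  rw [mem_Bpi]
  have ra : Coalgebra.Repr ℂ a (F × F) := ℛ ℂ a
  have rb : Coalgebra.Repr ℂ b (F × F) := ℛ ℂ b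
  have hex : LinearMap.rTensor F π (Coalgebra.comul (a * b))
      = ∑ i ∈ ra.index, ∑ j ∈ rb.index,
          π (ra.left i * rb.left j) ⊗ₜ[ℂ] (ra.right i * rb.right j) := by
    rw [Bialgebra.comul_mul, ← ra.eq, ← rb.eq, Finset.sum_mul_sum, map_sum]
    refine Finset.sum_congr rfl fun i _ => ?_
    rw [map_sum]
    refine Finset.sum_congr rfl fun j _ => ?_
    rw [Algebra.TensorProduct.tmul_mul_tmul]
    simp
  rw [hex]
  have step1 : ∀ i ∈ ra.index,
      (∑ j ∈ rb.index, π (ra.left i * rb.left j) ⊗ₜ[ℂ] (ra.right i * rb.right j))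
      = π (ra.left i) ⊗ₜ[ℂ] (ra.right i * b) := by
    intro i _
    have h := Bpi_apply hb rb
      (TensorProduct.map (act (ra.left i)) (LinearMap.mulLeft ℂ (ra.right i)))
    simp only [TensorProduct.map_tmul, LinearMap.mulLeft_apply] at h
    calc (∑ j ∈ rb.index, π (ra.left i * rb.left j) ⊗ₜ[ℂ] (ra.right i * rb.right j))
        = ∑ j ∈ rb.index, act (ra.left i) (π (rb.left j)) ⊗ₜ[ℂ] (ra.right i * rb.right j) := by
          refine Finset.sum_congr rfl fun j _ => ?_
          rw [hact_π]
      _ = act (ra.left i) (π 1) ⊗ₜ[ℂ] (ra.right i * b) := h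
      _ = π (ra.left i) ⊗ₜ[ℂ] (ra.right i * b) := by rw [hact_π, mul_one]
  rw [Finset.sum_congr rfl step1]
  have h2 := Bpi_apply ha ra (TensorProduct.map LinearMap.id (LinearMap.mulRight ℂ b))
  simp only [TensorProduct.map_tmul, LinearMap.mulRight_apply, LinearMap.id_coe, id_eq] at h2
  exact h2

lemma Bpi_lreg_mem {π : F →ₗ[ℂ] K} (p : U →ₗ[ℂ] F →ₗ[ℂ] ℂ) (X : U) {a : F}
    (ha : a ∈ Bpi π) : lreg p X a ∈ Bpi π := by
  rw [mem_Bpi]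
  have r : Coalgebra.Repr ℂ a (F × F) := ℛ ℂ a
  have rL : ∀ i, Coalgebra.Repr ℂ (r.left i) (F × F) := fun i => ℛ ℂ _
  have rR : ∀ i, Coalgebra.Repr ℂ (r.right i) (F × F) := fun i => ℛ ℂ _
  set G : F ⊗[ℂ] (F ⊗[ℂ] F) →ₗ[ℂ] K ⊗[ℂ] F :=
    TensorProduct.map π
      ((TensorProduct.rid ℂ F).toLinearMap ∘ₗ LinearMap.lTensor F (p X)) with hG
  have hGapp : ∀ x y z : F, G (x ⊗ₜ[ℂ] (y ⊗ₜ[ℂ] z)) = p X z • (π x ⊗ₜ[ℂ] y) := by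
    intro x y z
    simp [hG, TensorProduct.map_tmul, TensorProduct.rid_tmul, TensorProduct.tmul_smul]
  have hex := exchange_map r rL rR G
  have hlhs : LinearMap.rTensor F π (Coalgebra.comul (lreg p X a))
      = ∑ i ∈ r.index, ∑ j ∈ (rL i).index,
          G ((rL i).left j ⊗ₜ[ℂ] ((rL i).right j ⊗ₜ[ℂ] r.right i)) := by
    rw [lreg_repr p X r, map_sum, map_sum]
    refine Finset.sum_congr rfl fun i _ => ?_
    rw [map_smul, map_smul, ← (rL i).eq, map_sum, Finset.smul_sum]
    refine Finset.sum_congr rfl fun j _ => ?_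
    rw [hGapp]
    simp
  have hrhs : (∑ i ∈ r.index, ∑ j ∈ (rR i).index,
      G (r.left i ⊗ₜ[ℂ] ((rR i).left j ⊗ₜ[ℂ] (rR i).right j)))
      = π 1 ⊗ₜ[ℂ] lreg p X a := by
    have h2 := Bpi_apply ha r (LinearMap.lTensor K (lreg p X))
    simp only [LinearMap.lTensor_tmul] at h2
    calc (∑ i ∈ r.index, ∑ j ∈ (rR i).index,
        G (r.left i ⊗ₜ[ℂ] ((rR i).left j ⊗ₜ[ℂ] (rR i).right j)))
        = ∑ i ∈ r.index, π (r.left i) ⊗ₜ[ℂ] lreg p X (r.right i) := by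
          refine Finset.sum_congr rfl fun i _ => ?_
          rw [lreg_repr p X (rR i), TensorProduct.tmul_sum]
          refine Finset.sum_congr rfl fun j _ => ?_
          rw [hGapp]
          simp
      _ = π 1 ⊗ₜ[ℂ] lreg p X a := h2
  rw [hlhs, hex, hrhs]

lemma lreg_mul_apply.{w} (p : U →ₗ[ℂ] F →ₗ[ℂ] ℂ)
    (hp_mul : ∀ (X Y : U) (a : F) {ι : Type w} (r : Coalgebra.Repr ℂ a ι),
      p (X * Y) a = ∑ i ∈ r.index, p X (r.left i) * p Y (r.right i))
    (X Y : U) (a : F) :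
    lreg p X (lreg p Y a) = lreg p (X * Y) a := by
  have r : Coalgebra.Repr ℂ a (F × F) := ℛ ℂ a
  have rL : ∀ i, Coalgebra.Repr ℂ (r.left i) (F × F) := fun i => ℛ ℂ _
  have rR : ∀ i, Coalgebra.Repr ℂ (r.right i) (ULift.{w} (Fin (ℛ ℂ (r.right i)).index.card)) :=
    fun i => reprU _
  set G : F ⊗[ℂ] (F ⊗[ℂ] F) →ₗ[ℂ] F :=
    (TensorProduct.rid ℂ F).toLinearMap ∘ₗ
      LinearMap.lTensor F (LinearMap.mul' ℂ ℂ ∘ₗ TensorProduct.map (p X) (p Y)) with hG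
  have hGapp : ∀ x y z : F, G (x ⊗ₜ[ℂ] (y ⊗ₜ[ℂ] z)) = (p X y * p Y z) • x := by
    intro x y z
    simp [hG, TensorProduct.rid_tmul]
  have hex := exchange_map r rL rR G
  calc lreg p X (lreg p Y a)
      = ∑ i ∈ r.index, ∑ j ∈ (rL i).index,
          G ((rL i).left j ⊗ₜ[ℂ] ((rL i).right j ⊗ₜ[ℂ] r.right i)) := by
        rw [lreg_repr p Y r, map_sum]
        refine Finset.sum_congr rfl fun i _ => ?_
        rw [map_smul, lreg_repr p X (rL i), Finset.smul_sum]
        refine Finset.sum_congr rfl fun j _ => ?_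
        rw [hGapp, smul_smul, mul_comm]
    _ = ∑ i ∈ r.index, ∑ j ∈ (rR i).index,
          G (r.left i ⊗ₜ[ℂ] ((rR i).left j ⊗ₜ[ℂ] (rR i).right j)) := hex
    _ = lreg p (X * Y) a := by
        rw [lreg_repr p (X * Y) r]
        refine Finset.sum_congr rfl fun i _ => ?_
        rw [hp_mul X Y (r.right i) (rR i), Finset.sum_smul]
        refine Finset.sum_congr rfl fun j _ => ?_
        rw [hGapp]

lemma Bpi_sinv {π : F →ₗ[ℂ] K}
    (hSbij : Function.Bijective (HopfAlgebra.antipode (R := ℂ) (A := F)))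
    (act : F →ₗ[ℂ] K →ₗ[ℂ] K) (hact_π : ∀ a b : F, act a (π b) = π (a * b))
    {ι : Type*} {a : F} (ha : a ∈ Bpi π) (r : Coalgebra.Repr ℂ a ι) :
    ∑ i ∈ r.index, π ((LinearEquiv.ofBijective _ hSbij).symm (r.left i)) ⊗ₜ[ℂ] r.right i
      = π 1 ⊗ₜ[ℂ] a := by
  have rL : ∀ i, Coalgebra.Repr ℂ (r.left i) (F × F) := fun i => ℛ ℂ _
  have rR : ∀ i, Coalgebra.Repr ℂ (r.right i) (F × F) := fun i => ℛ ℂ _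
  set e := LinearEquiv.ofBijective _ hSbij with he
  set actS : K ⊗[ℂ] F →ₗ[ℂ] K :=
    TensorProduct.lift ((act ∘ₗ (e.symm : F →ₗ[ℂ] F)).flip) with hactS
  set Θ : K ⊗[ℂ] (F ⊗[ℂ] F) →ₗ[ℂ] K ⊗[ℂ] F :=
    LinearMap.rTensor F actS ∘ₗ (TensorProduct.assoc ℂ K F F).symm.toLinearMap with hΘ
  have hΘapp : ∀ (κ : K) (y z : F), Θ (κ ⊗ₜ[ℂ] (y ⊗ₜ[ℂ] z)) = act (e.symm y) κ ⊗ₜ[ℂ] z := by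
    intro κ y z
    simp [hΘ, hactS]
  have I1 : (∑ i ∈ r.index, ∑ j ∈ (rR i).index,
      π (r.left i) ⊗ₜ[ℂ] ((rR i).left j ⊗ₜ[ℂ] (rR i).right j))
      = ∑ i ∈ r.index, π 1 ⊗ₜ[ℂ] (r.left i ⊗ₜ[ℂ] r.right i) := by
    have h0 := Bpi_apply ha r (LinearMap.lTensor K (Coalgebra.comul (R := ℂ)))
    simp only [LinearMap.lTensor_tmul] at h0
    calc (∑ i ∈ r.index, ∑ j ∈ (rR i).index,
        π (r.left i) ⊗ₜ[ℂ] ((rR i).left j ⊗ₜ[ℂ] (rR i).right j))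
        = ∑ i ∈ r.index, π (r.left i) ⊗ₜ[ℂ] Coalgebra.comul (r.right i) := by
          refine Finset.sum_congr rfl fun i _ => ?_
          rw [← (rR i).eq, TensorProduct.tmul_sum]
      _ = π 1 ⊗ₜ[ℂ] Coalgebra.comul a := h0
      _ = ∑ i ∈ r.index, π 1 ⊗ₜ[ℂ] (r.left i ⊗ₜ[ℂ] r.right i) := by
          rw [← r.eq, TensorProduct.tmul_sum]
  have I2 := congrArg Θ I1
  simp only [map_sum] at I2
  set m2 : F ⊗[ℂ] F →ₗ[ℂ] F :=
    LinearMap.mul' ℂ F ∘ₗ TensorProduct.map (e.symm : F →ₗ[ℂ] F) LinearMap.id ∘ₗ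
      (TensorProduct.comm ℂ F F).toLinearMap with hm2
  set G : F ⊗[ℂ] (F ⊗[ℂ] F) →ₗ[ℂ] K ⊗[ℂ] F :=
    LinearMap.rTensor F (π ∘ₗ m2) ∘ₗ (TensorProduct.assoc ℂ F F F).symm.toLinearMap with hG
  have hGapp : ∀ x y z : F, G (x ⊗ₜ[ℂ] (y ⊗ₜ[ℂ] z)) = π (e.symm y * x) ⊗ₜ[ℂ] z := by
    intro x y z
    simp [hG, hm2]
  have hex := exchange_map r rL rR G
  calc (∑ i ∈ r.index, π (e.symm (r.left i)) ⊗ₜ[ℂ] r.right i)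
      = ∑ i ∈ r.index, Θ (π 1 ⊗ₜ[ℂ] (r.left i ⊗ₜ[ℂ] r.right i)) := by
        refine Finset.sum_congr rfl fun i _ => ?_
        rw [hΘapp, hact_π, mul_one]
    _ = ∑ i ∈ r.index, ∑ j ∈ (rR i).index,
          Θ (π (r.left i) ⊗ₜ[ℂ] ((rR i).left j ⊗ₜ[ℂ] (rR i).right j)) := I2.symm
    _ = ∑ i ∈ r.index, ∑ j ∈ (rR i).index,
          G (r.left i ⊗ₜ[ℂ] ((rR i).left j ⊗ₜ[ℂ] (rR i).right j)) := by
        refine Finset.sum_congr rfl fun i _ => Finset.sum_congr rfl fun j _ => ?_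
        rw [hΘapp, hGapp, hact_π]
    _ = ∑ i ∈ r.index, ∑ j ∈ (rL i).index,
          G ((rL i).left j ⊗ₜ[ℂ] ((rL i).right j ⊗ₜ[ℂ] r.right i)) := hex.symm
    _ = ∑ i ∈ r.index, (Coalgebra.counit (r.left i) : ℂ) • (π 1 ⊗ₜ[ℂ] r.right i) := by
        refine Finset.sum_congr rfl fun i _ => ?_
        have hs := sum_sinv_mul hSbij (rL i)
        calc (∑ j ∈ (rL i).index, G ((rL i).left j ⊗ₜ[ℂ] ((rL i).right j ⊗ₜ[ℂ] r.right i)))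
            = ∑ j ∈ (rL i).index, π (e.symm ((rL i).right j) * (rL i).left j) ⊗ₜ[ℂ] r.right i := by
              refine Finset.sum_congr rfl fun j _ => ?_
              rw [hGapp]
          _ = π (∑ j ∈ (rL i).index, e.symm ((rL i).right j) * (rL i).left j) ⊗ₜ[ℂ] r.right i := by
              rw [map_sum, TensorProduct.sum_tmul]
          _ = (Coalgebra.counit (r.left i) : ℂ) • (π 1 ⊗ₜ[ℂ] r.right i) := by
              rw [hs, map_smul, TensorProduct.smul_tmul']
    _ = ∑ i ∈ r.index, π 1 ⊗ₜ[ℂ] ((Coalgebra.counit (r.left i) : ℂ) • r.right i) := by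
        refine Finset.sum_congr rfl fun i _ => ?_
        rw [TensorProduct.tmul_smul]
    _ = π 1 ⊗ₜ[ℂ] a := by
        rw [← TensorProduct.tmul_sum, sum_counit_smul_right' r]

lemma Bpi_star_mem.{w} {π : F →ₗ[ℂ] K}
    (hSbij : Function.Bijective (HopfAlgebra.antipode (R := ℂ) (A := F)))
    (hcomul_star : ∀ (a : F) {ι : Type w} (r : Coalgebra.Repr ℂ a ι),
      Coalgebra.comul (star a) = ∑ i ∈ r.index, star (r.left i) ⊗ₜ[ℂ] star (r.right i))
    (act : F →ₗ[ℂ] K →ₗ[ℂ] K) (hact_π : ∀ a b : F, act a (π b) = π (a * b))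
    (τK : K → K)
    (hτK_add : ∀ x y : K, τK (x + y) = τK x + τK y)
    (hτK_smul : ∀ (c : ℂ) (x : K), τK (c • x) = (starRingEnd ℂ) c • τK x)
    (hτK_π : ∀ a : F, τK (π a) = π (star (HopfAlgebra.antipode (R := ℂ) a)))
    {a : F} (ha : a ∈ Bpi π) : star a ∈ Bpi π := by
  rw [mem_Bpi]
  have r : Coalgebra.Repr ℂ a (ULift.{w} (Fin (ℛ ℂ a).index.card)) := reprU a
  rw [hcomul_star a r, map_sum]
  simp only [LinearMap.rTensor_tmul]
  set e := LinearEquiv.ofBijective _ hSbij with he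
  have hss : ∀ z : F, HopfAlgebra.antipode (R := ℂ) (e.symm z) = z := fun z =>
    e.apply_symm_apply z
  have hπstar : ∀ b : F, π (star b) = τK (π (e.symm b)) := by
    intro b
    rw [hτK_π, hss]
  have hτK0 : τK 0 = 0 := by
    have := hτK_smul 0 0
    simpa using this
  let f : K →+ F →+ K ⊗[ℂ] F :=
    { toFun := fun κ =>
        { toFun := fun z => τK κ ⊗ₜ[ℂ] star z
          map_zero' := by simp
          map_add' := fun z w => by simp [star_add, TensorProduct.tmul_add] }
      map_zero' := by
        ext z
        simp [hτK0]
      map_add' := fun κ₁ κ₂ => by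
        ext z
        simp [hτK_add, TensorProduct.add_tmul] }
  let T : K ⊗[ℂ] F →+ K ⊗[ℂ] F := TensorProduct.liftAddHom f (fun c κ z => by
    show τK (c • κ) ⊗ₜ[ℂ] star z = τK κ ⊗ₜ[ℂ] star (c • z)
    rw [hτK_smul, star_smul, TensorProduct.smul_tmul, starRingEnd_apply])
  have hT : ∀ (κ : K) (z : F), T (κ ⊗ₜ[ℂ] z) = τK κ ⊗ₜ[ℂ] star z := fun κ z =>
    TensorProduct.liftAddHom_tmul _ _ _ _
  have hCA := Bpi_sinv hSbij act hact_π ha r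
  have I := congrArg T hCA
  rw [map_sum] at I
  simp only [hT] at I
  have hπ1 : τK (π 1) = π 1 := by
    rw [hτK_π]
    rw [antipode_one', star_one]
  calc (∑ i ∈ r.index, π (star (r.left i)) ⊗ₜ[ℂ] star (r.right i))
      = ∑ i ∈ r.index, τK (π (e.symm (r.left i))) ⊗ₜ[ℂ] star (r.right i) := by
        refine Finset.sum_congr rfl fun i _ => ?_
        rw [hπstar]
    _ = τK (π 1) ⊗ₜ[ℂ] star a := I
    _ = π 1 ⊗ₜ[ℂ] star a := by rw [hπ1]

end AuxBpi


/-- Translation of a quasi-invariant functional by a real group-like element `k ∈ U`: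
`h_k(a) := h(k.a)` is real, equals `a ↦ h(φ[k*]* a φ[k*])`, is quasi-invariant with weight
`φ_k[X] = φ[X S(k)] (S(k).φ[k])`, and is positive whenever `h` is positive. -/
theorem statement9
    (hcomul_star : ∀ (a : F) {ι : Type*} (r : Coalgebra.Repr ℂ a ι),
      Coalgebra.comul (star a) = ∑ i ∈ r.index, star (r.left i) ⊗ₜ[ℂ] star (r.right i))
    (hcounit_star : ∀ a : F, (Coalgebra.counit (star a) : ℂ) = starRingEnd ℂ (Coalgebra.counit a))
    (hSbij : Function.Bijective (HopfAlgebra.antipode (R := ℂ) (A := F)))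
    (hUcomul_star : ∀ (X : U) {ι : Type*} (r : Coalgebra.Repr ℂ X ι),
      Coalgebra.comul (star X) = ∑ i ∈ r.index, star (r.left i) ⊗ₜ[ℂ] star (r.right i))
    (hUcounit_star : ∀ X : U, (Coalgebra.counit (star X) : ℂ) = starRingEnd ℂ (Coalgebra.counit X))
    (hUSbij : Function.Bijective (HopfAlgebra.antipode (R := ℂ) (A := U)))
    (π : F →ₗ[ℂ] K) (hπsurj : Function.Surjective π)
    (hπcomul : ∀ a : F, Coalgebra.comul (π a) = TensorProduct.map π π (Coalgebra.comul a))
    (hπcounit : ∀ a : F, (Coalgebra.counit (π a) : ℂ) = (Coalgebra.counit a : ℂ))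
    (act : F →ₗ[ℂ] K →ₗ[ℂ] K)
    (hact_one : ∀ k : K, act 1 k = k)
    (hact_mul : ∀ (a b : F) (k : K), act (a * b) k = act a (act b k))
    (hact_π : ∀ a b : F, act a (π b) = π (a * b))
    (τK : K → K)
    (hτK_add : ∀ x y : K, τK (x + y) = τK x + τK y)
    (hτK_smul : ∀ (c : ℂ) (x : K), τK (c • x) = (starRingEnd ℂ) c • τK x)
    (hτK_π : ∀ a : F, τK (π a) = π (star (HopfAlgebra.antipode (R := ℂ) a)))
    (p : U →ₗ[ℂ] F →ₗ[ℂ] ℂ)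
    (hp_mul : ∀ (X Y : U) (a : F) {ι : Type*} (r : Coalgebra.Repr ℂ a ι),
      p (X * Y) a = ∑ i ∈ r.index, p X (r.left i) * p Y (r.right i))
    (hp_mul' : ∀ (X : U) (a b : F) {ι : Type*} (r : Coalgebra.Repr ℂ X ι),
      p X (a * b) = ∑ i ∈ r.index, p (r.left i) a * p (r.right i) b)
    (hp_one : ∀ a : F, p 1 a = (Coalgebra.counit a : ℂ))
    (hp_one' : ∀ X : U, p X 1 = (Coalgebra.counit X : ℂ))
    (hp_antipode : ∀ (X : U) (a : F),
      p (HopfAlgebra.antipode (R := ℂ) X) a = p X (HopfAlgebra.antipode (R := ℂ) a))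
    (hp_star : ∀ (X : U) (a : F),
      p (star X) a = starRingEnd ℂ (p X (star (HopfAlgebra.antipode (R := ℂ) a))))
    (φ : U →ₗ[ℂ] F)
    (hφ_one : φ 1 = 1)
    (hφ_mem : ∀ X : U, φ X ∈ Bpi π)
    (hφ_cocycle : ∀ (X Y : U) {ι : Type*} (r : Coalgebra.Repr ℂ X ι),
      φ (X * Y) = ∑ i ∈ r.index, lreg p (r.left i) (φ Y) * φ (r.right i))
    (h : F →ₗ[ℂ] ℂ)
    (hreal : ∀ a ∈ Bpi π, h (star a) = starRingEnd ℂ (h a))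
    (hqi : QuasiInvL π p h φ)
    (k : U)
    (hk_comul : Coalgebra.comul k = k ⊗ₜ[ℂ] k)
    (hk_counit : (Coalgebra.counit k : ℂ) = 1)
    (hk_real : star (HopfAlgebra.antipode (R := ℂ) k) = k) :
    -- `h_k = h ∘ (k.·)` is a real functional
    (∀ a ∈ Bpi π, h (lreg p k (star a)) = starRingEnd ℂ (h (lreg p k a))) ∧
    -- `h_k(a) = h(φ[k*]* a φ[k*])`, i.e. `h_k` is `ξ`-equivalent to `h` with `ξ = φ[k*]`
    (∀ a ∈ Bpi π, h (lreg p k a) = h (star (φ (star k)) * a * φ (star k))) ∧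
    -- `h_k` is quasi-invariant with weight `φ_k[X] = φ[X S(k)] (S(k).φ[k])`
    QuasiInvL π p (h ∘ₗ lreg p k)
      (LinearMap.mulRight ℂ (lreg p (HopfAlgebra.antipode (R := ℂ) k) (φ k)) ∘ₗ φ ∘ₗ
        LinearMap.mulRight ℂ (HopfAlgebra.antipode (R := ℂ) k)) ∧
    -- positivity is preserved
    ((∀ a ∈ Bpi π, 0 ≤ h (star a * a)) → ∀ a ∈ Bpi π, 0 ≤ h (lreg p k (star a * a))) := by
    classical
  have hBmul : ∀ {x y : F}, x ∈ Bpi π → y ∈ Bpi π → x * y ∈ Bpi π :=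
    fun hx hy => Bpi_mul_mem act hact_π hx hy
  have hBstar : ∀ {x : F}, x ∈ Bpi π → star x ∈ Bpi π :=
    fun hx => Bpi_star_mem hSbij hcomul_star act hact_π τK hτK_add hτK_smul hτK_π hx
  have hSk : HopfAlgebra.antipode (R := ℂ) k = star k := by
    have := congrArg star hk_real
    rwa [star_star] at this
  have hSkk : HopfAlgebra.antipode (R := ℂ) k * k = 1 := by
    have hs : ∑ _z ∈ (Finset.univ : Finset PUnit.{1}),
        HopfAlgebra.antipode (R := ℂ) k * k = (Coalgebra.counit k : ℂ) • (1 : U) :=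
      HopfAlgebra.sum_antipode_mul_eq_smul (R := ℂ) (reprSingle k hk_comul)
    simpa [hk_counit] using hs
  have hkstar_comul : Coalgebra.comul (star k) = star k ⊗ₜ[ℂ] star k := by
    have hs := hUcomul_star k (reprSingle k hk_comul)
    simpa [reprSingle] using hs
  have hSk_comul : Coalgebra.comul (HopfAlgebra.antipode (R := ℂ) k)
      = HopfAlgebra.antipode (R := ℂ) k ⊗ₜ[ℂ] HopfAlgebra.antipode (R := ℂ) k := by
    rw [hSk]
    exact hkstar_comul
  have hηξ : lreg p (HopfAlgebra.antipode (R := ℂ) k) (φ k) * φ (star k) = 1 := by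
    have hc : φ (HopfAlgebra.antipode (R := ℂ) k * k) = ∑ _z ∈ (Finset.univ : Finset PUnit.{1}),
        lreg p (HopfAlgebra.antipode (R := ℂ) k) (φ k) *
          φ (HopfAlgebra.antipode (R := ℂ) k) :=
      hφ_cocycle (HopfAlgebra.antipode (R := ℂ) k) k
        (reprSingle (HopfAlgebra.antipode (R := ℂ) k) hSk_comul)
    rw [hSkk, hφ_one] at hc
    have hc2 : (1 : F) = lreg p (HopfAlgebra.antipode (R := ℂ) k) (φ k) *
        φ (HopfAlgebra.antipode (R := ℂ) k) := by simpa using hc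
    rw [← hSk]
    exact hc2.symm
  have hξmem : φ (star k) ∈ Bpi π := hφ_mem _
  have hηmem : lreg p (HopfAlgebra.antipode (R := ℂ) k) (φ k) ∈ Bpi π :=
    Bpi_lreg_mem p _ (hφ_mem k)
  have main2 : ∀ a ∈ Bpi π, h (lreg p k a) = h (star (φ (star k)) * a * φ (star k)) := by
    intro a ha
    have hq : h (lreg p k a) = ∑ _z ∈ (Finset.univ : Finset PUnit.{1}),
        h (star (φ (star k)) * a * φ (HopfAlgebra.antipode (R := ℂ) k)) :=
      hqi k a ha (reprSingle k hk_comul)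
    rw [hq]
    simp [hSk]
  refine ⟨?_, main2, ?_, ?_⟩
  · -- reality
    intro a ha
    rw [main2 _ (hBstar ha), main2 _ ha]
    have hrw : star (φ (star k)) * star a * φ (star k)
        = star (star (φ (star k)) * a * φ (star k)) := by
      rw [star_mul, star_mul, star_star, mul_assoc]
    rw [hrw, hreal _ (hBmul (hBmul (hBstar hξmem) ha) hξmem)]
  · -- quasi-invariance of the translate
    intro X a ha ι r
    have hq : h (lreg p (k * X) a) = ∑ z ∈ (Finset.univ : Finset PUnit.{1}) ×ˢ r.index,
        h (star (φ (star (k * r.left z.2))) * a *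
          φ (HopfAlgebra.antipode (R := ℂ) (k * r.right z.2))) :=
      hqi (k * X) a ha (reprMul' (reprSingle k hk_comul) r)
    rw [Finset.sum_product] at hq
    have hq2 : h (lreg p (k * X) a) = ∑ i ∈ r.index,
        h (star (φ (star (k * r.left i))) * a *
          φ (HopfAlgebra.antipode (R := ℂ) (k * r.right i))) := by simpa using hq
    simp only [LinearMap.coe_comp, Function.comp_apply, LinearMap.mulRight_apply]
    rw [lreg_mul_apply p hp_mul k X a, hq2]
    refine Finset.sum_congr rfl fun i _ => ?_
    have h1 : star (k * r.left i) = star (r.left i) * HopfAlgebra.antipode (R := ℂ) k := by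
      rw [star_mul, hSk]
    have h2 : HopfAlgebra.antipode (R := ℂ) (k * r.right i)
        = HopfAlgebra.antipode (R := ℂ) (r.right i) * HopfAlgebra.antipode (R := ℂ) k :=
      antipode_mul' k (r.right i)
    rw [h1, h2]
    have hb : star (φ (star (r.left i) * HopfAlgebra.antipode (R := ℂ) k) *
          lreg p (HopfAlgebra.antipode (R := ℂ) k) (φ k)) * a *
        (φ (HopfAlgebra.antipode (R := ℂ) (r.right i) * HopfAlgebra.antipode (R := ℂ) k) *
          lreg p (HopfAlgebra.antipode (R := ℂ) k) (φ k)) ∈ Bpi π :=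
      hBmul (hBmul (hBstar (hBmul (hφ_mem _) hηmem)) ha) (hBmul (hφ_mem _) hηmem)
    rw [main2 _ hb]
    congr 1
    have hsξη : star (φ (star k)) *
        star (lreg p (HopfAlgebra.antipode (R := ℂ) k) (φ k)) = 1 := by
      calc star (φ (star k)) * star (lreg p (HopfAlgebra.antipode (R := ℂ) k) (φ k))
          = star (lreg p (HopfAlgebra.antipode (R := ℂ) k) (φ k) * φ (star k)) :=
            (star_mul _ _).symm
        _ = 1 := by rw [hηξ, star_one]
    rw [star_mul (φ (star (r.left i) * HopfAlgebra.antipode (R := ℂ) k))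
      (lreg p (HopfAlgebra.antipode (R := ℂ) k) (φ k))]
    simp only [mul_assoc]
    rw [hηξ, mul_one, ← mul_assoc (star (φ (star k)))
      (star (lreg p (HopfAlgebra.antipode (R := ℂ) k) (φ k))), hsξη, one_mul]
  · -- positivity
    intro hpos a ha
    have hmem : star a * a ∈ Bpi π := hBmul (hBstar ha) ha
    rw [main2 _ hmem]
    have hrw : star (φ (star k)) * (star a * a) * φ (star k)
        = star (a * φ (star k)) * (a * φ (star k)) := by
      rw [star_mul a (φ (star k))]
      simp only [mul_assoc]
    rw [hrw]
    exact hpos _ (hBmul ha hξmem)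
end
end

section
/- Let (K, π, τ_K) be a real coisotropic quantum left subgroup of F, ρ_R a right corepresentation of K on V, and A = Σ_i e_i⊗A_i ∈ ind_K^G(ρ_R), so that (π⊗id)(ΔA_i) = Σ_j a_{ij}⊗A_j. Then for each index i the following identity holds in K⊗F: Σ_j Σ_{(A_j)} S⁻¹((A_j)₍₁₎)·a_{ij} ⊗ (A_j)₍₂₎ = π(1)⊗A_i, where · denotes the left F-module action on K. -/
open scoped TensorProduct
open Coalgebra

noncomputable section

variable {F : Type*} [Ring F] [HopfAlgebra ℂ F] [StarRing F] [StarModule ℂ F]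
variable {K : Type*} [AddCommGroup K] [Module ℂ K] [Coalgebra ℂ K]
variable {V : Type*} [AddCommGroup V] [Module ℂ V]

/-- The induced space `ind_K^G(ρ_R) = {A ∈ V ⊗ F | (id ⊗ L)A = (ρ_R ⊗ id)A}`,
where `L = (π ⊗ id) ∘ Δ`. -/
def indK (π : F →ₗ[ℂ] K) (ρR : V →ₗ[ℂ] V ⊗[ℂ] K) : Submodule ℂ (V ⊗[ℂ] F) :=
  LinearMap.ker (LinearMap.lTensor V (LinearMap.rTensor F π ∘ₗ Coalgebra.comul)
    - (TensorProduct.assoc ℂ V K F).toLinearMap ∘ₗ LinearMap.rTensor F ρR)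

local notation "𝑆" => (HopfAlgebra.antipode (R := ℂ) (A := F))

theorem my_antipode_one : 𝑆 (1 : F) = 1 := by
  have h := HopfAlgebra.mul_antipode_rTensor_comul_apply (R := ℂ) (a := (1 : F))
  simpa [Bialgebra.comul_one, Algebra.TensorProduct.one_def] using h

theorem repr_sum_counit_smul {a : F} {κ : Type*} (r : Coalgebra.Repr ℂ a κ) :
    ∑ i ∈ r.index, (counit (R := ℂ) (r.left i) : ℂ) • r.right i = a := by
  have h := congrArg (TensorProduct.lid ℂ F) (Coalgebra.sum_counit_tmul_eq (R := ℂ) r)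
  rw [map_sum] at h
  simp only [TensorProduct.lid_tmul, one_smul] at h
  exact h

theorem repr_sum_smul_counit {a : F} {κ : Type*} (r : Coalgebra.Repr ℂ a κ) :
    ∑ i ∈ r.index, (counit (R := ℂ) (r.right i) : ℂ) • r.left i = a := by
  have h := congrArg (TensorProduct.rid ℂ F) (Coalgebra.sum_tmul_counit_eq (R := ℂ) r)
  rw [map_sum] at h
  simp only [TensorProduct.rid_tmul, one_smul] at h
  exact h

/-- Product representation: `Δ(xy) = Δx Δy`. -/
def Repr.mulRepr {x y : F} {κ₁ κ₂ : Type*} (rx : Coalgebra.Repr ℂ x κ₁) (ry : Coalgebra.Repr ℂ y κ₂) :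
    Coalgebra.Repr ℂ (x * y) (κ₁ × κ₂) where
  index := rx.index ×ˢ ry.index
  left := fun p => rx.left p.1 * ry.left p.2
  right := fun p => rx.right p.1 * ry.right p.2
  eq := by
    rw [Bialgebra.comul_mul, ← rx.eq, ← ry.eq, Finset.sum_mul_sum]
    rw [Finset.sum_product]
    simp [Algebra.TensorProduct.tmul_mul_tmul]

theorem claimA {x y : F} {κ₁ κ₂ : Type*} (rx : Coalgebra.Repr ℂ x κ₁) (ry : Coalgebra.Repr ℂ y κ₂) :
    ∑ i ∈ rx.index, ∑ j ∈ ry.index,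
      𝑆 (rx.left i * ry.left j) * (rx.right i * ry.right j)
      = ((counit (R := ℂ) x : ℂ) * (counit (R := ℂ) y : ℂ)) • (1 : F) := by
  have h := HopfAlgebra.sum_antipode_mul_eq_smul (R := ℂ) (Repr.mulRepr rx ry)
  simp only [Repr.mulRepr] at h
  rw [Finset.sum_product] at h
  simpa [Bialgebra.counit_mul] using h

theorem claimB {x y : F} {κ₁ κ₂ : Type*} (rx : Coalgebra.Repr ℂ x κ₁) (ry : Coalgebra.Repr ℂ y κ₂) :
    ∑ i ∈ rx.index, ∑ j ∈ ry.index,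
      (rx.left i * ry.left j) * (𝑆 (ry.right j) * 𝑆 (rx.right i))
      = ((counit (R := ℂ) x : ℂ) * (counit (R := ℂ) y : ℂ)) • (1 : F) := by
  have hy := HopfAlgebra.sum_mul_antipode_eq_smul (R := ℂ) ry
  have hx := HopfAlgebra.sum_mul_antipode_eq_smul (R := ℂ) rx
  calc ∑ i ∈ rx.index, ∑ j ∈ ry.index,
      (rx.left i * ry.left j) * (𝑆 (ry.right j) * 𝑆 (rx.right i))
      = ∑ i ∈ rx.index, rx.left i *
          ((∑ j ∈ ry.index, ry.left j * 𝑆 (ry.right j)) * 𝑆 (rx.right i)) := by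
        refine Finset.sum_congr rfl fun i _ => ?_
        rw [Finset.sum_mul, Finset.mul_sum]
        refine Finset.sum_congr rfl fun j _ => ?_
        noncomm_ring
    _ = ((counit (R := ℂ) x : ℂ) * (counit (R := ℂ) y : ℂ)) • (1 : F) := by
        rw [hy]
        simp only [smul_mul_assoc, one_mul, mul_smul_comm]
        rw [← Finset.smul_sum, hx, smul_smul, mul_comm]

theorem sum4_comm {M : Type*} [AddCommMonoid M] {α β : Type*} {γ : α → Type*} {δ : β → Type*}
    (s : Finset α) (t : Finset β) (u : (i : α) → Finset (γ i)) (v : (j : β) → Finset (δ j))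
    (f : (i : α) → (j : β) → γ i → δ j → M) :
    ∑ i ∈ s, ∑ j ∈ t, ∑ k ∈ u i, ∑ l ∈ v j, f i j k l
      = ∑ j ∈ t, ∑ l ∈ v j, ∑ i ∈ s, ∑ k ∈ u i, f i j k l := by
  calc ∑ i ∈ s, ∑ j ∈ t, ∑ k ∈ u i, ∑ l ∈ v j, f i j k l
      = ∑ j ∈ t, ∑ i ∈ s, ∑ k ∈ u i, ∑ l ∈ v j, f i j k l := Finset.sum_comm
    _ = ∑ j ∈ t, ∑ i ∈ s, ∑ l ∈ v j, ∑ k ∈ u i, f i j k l :=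
        Finset.sum_congr rfl fun j _ => Finset.sum_congr rfl fun i _ => Finset.sum_comm
    _ = ∑ j ∈ t, ∑ l ∈ v j, ∑ i ∈ s, ∑ k ∈ u i, f i j k l :=
        Finset.sum_congr rfl fun j _ => Finset.sum_comm

theorem antipode_antimul (x y : F) : 𝑆 (x * y) = 𝑆 y * 𝑆 x := by
  have rx : Coalgebra.Repr ℂ x (F × F) := Coalgebra.Repr.arbitrary ℂ x
  have ry : Coalgebra.Repr ℂ y (F × F) := Coalgebra.Repr.arbitrary ℂ y
  have a₁ : (i : F × F) → Coalgebra.Repr ℂ (rx.left i) (F × F) := fun i => Coalgebra.Repr.arbitrary ℂ _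
  have a₂ : (i : F × F) → Coalgebra.Repr ℂ (rx.right i) (F × F) := fun i => Coalgebra.Repr.arbitrary ℂ _
  have b₁ : (j : F × F) → Coalgebra.Repr ℂ (ry.left j) (F × F) := fun j => Coalgebra.Repr.arbitrary ℂ _
  have b₂ : (j : F × F) → Coalgebra.Repr ℂ (ry.right j) (F × F) := fun j => Coalgebra.Repr.arbitrary ℂ _
  have hswx : ∀ (f g h : F →ₗ[ℂ] F),
      ∑ i ∈ rx.index, ∑ k ∈ (a₂ i).index,
        f (rx.left i) * (g ((a₂ i).left k) * h ((a₂ i).right k))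
      = ∑ i ∈ rx.index, ∑ k ∈ (a₁ i).index,
        f ((a₁ i).left k) * (g ((a₁ i).right k) * h (rx.right i)) := by
    intro f g h
    have hc := Coalgebra.sum_map_tmul_tmul_eq (R := ℂ) f g h x (repr := rx) (a₁ := a₁) (a₂ := a₂)
    have := congrArg (LinearMap.mul' ℂ F ∘ₗ LinearMap.lTensor F (LinearMap.mul' ℂ F)) hc
    simpa only [map_sum, LinearMap.comp_apply, LinearMap.lTensor_tmul,
      LinearMap.mul'_apply] using this
  have hswy : ∀ (f g h : F →ₗ[ℂ] F),
      ∑ j ∈ ry.index, ∑ l ∈ (b₂ j).index,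
        f (ry.left j) * (g ((b₂ j).left l) * h ((b₂ j).right l))
      = ∑ j ∈ ry.index, ∑ l ∈ (b₁ j).index,
        f ((b₁ j).left l) * (g ((b₁ j).right l) * h (ry.right j)) := by
    intro f g h
    have hc := Coalgebra.sum_map_tmul_tmul_eq (R := ℂ) f g h y (repr := ry) (a₁ := b₁) (a₂ := b₂)
    have := congrArg (LinearMap.mul' ℂ F ∘ₗ LinearMap.lTensor F (LinearMap.mul' ℂ F)) hc
    simpa only [map_sum, LinearMap.comp_apply, LinearMap.lTensor_tmul,
      LinearMap.mul'_apply] using this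
  have step1 : ∑ i ∈ rx.index, ∑ j ∈ ry.index, ∑ k ∈ (a₂ i).index, ∑ l ∈ (b₂ j).index,
      𝑆 (rx.left i * ry.left j) *
        (((a₂ i).left k * (b₂ j).left l) * (𝑆 ((b₂ j).right l) * 𝑆 ((a₂ i).right k)))
      = 𝑆 (x * y) := by
    calc ∑ i ∈ rx.index, ∑ j ∈ ry.index, ∑ k ∈ (a₂ i).index, ∑ l ∈ (b₂ j).index,
        𝑆 (rx.left i * ry.left j) *
          (((a₂ i).left k * (b₂ j).left l) * (𝑆 ((b₂ j).right l) * 𝑆 ((a₂ i).right k)))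
        = ∑ i ∈ rx.index, ∑ j ∈ ry.index,
            ((counit (R := ℂ) (rx.right i) : ℂ) * (counit (R := ℂ) (ry.right j) : ℂ)) •
              𝑆 (rx.left i * ry.left j) := by
          refine Finset.sum_congr rfl fun i _ => Finset.sum_congr rfl fun j _ => ?_
          simp only [← Finset.mul_sum]
          rw [claimB (a₂ i) (b₂ j), mul_smul_comm, mul_one]
      _ = 𝑆 (x * y) := by
          conv_rhs => rw [← repr_sum_smul_counit rx, ← repr_sum_smul_counit ry]
          rw [Finset.sum_mul_sum, map_sum]
          refine Finset.sum_congr rfl fun i _ => ?_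
          rw [map_sum]
          refine Finset.sum_congr rfl fun j _ => ?_
          rw [smul_mul_smul_comm, map_smul]
  have step2 : ∑ j ∈ ry.index, ∑ l ∈ (b₂ j).index, ∑ i ∈ rx.index, ∑ k ∈ (a₂ i).index,
      𝑆 (rx.left i * ry.left j) *
        (((a₂ i).left k * (b₂ j).left l) * (𝑆 ((b₂ j).right l) * 𝑆 ((a₂ i).right k)))
      = ∑ j ∈ ry.index, ∑ l ∈ (b₂ j).index, ∑ i ∈ rx.index, ∑ k ∈ (a₁ i).index,
      𝑆 ((a₁ i).left k * ry.left j) *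
        (((a₁ i).right k * (b₂ j).left l) * (𝑆 ((b₂ j).right l) * 𝑆 (rx.right i))) := by
    refine Finset.sum_congr rfl fun j _ => Finset.sum_congr rfl fun l _ => ?_
    have := hswx (𝑆 ∘ₗ LinearMap.mulRight ℂ (ry.left j))
      (LinearMap.mulRight ℂ ((b₂ j).left l))
      (LinearMap.mulLeft ℂ (𝑆 ((b₂ j).right l)) ∘ₗ 𝑆)
    simpa only [LinearMap.comp_apply, LinearMap.mulRight_apply,
      LinearMap.mulLeft_apply] using this
  have step3 : ∑ i ∈ rx.index, ∑ k ∈ (a₁ i).index, ∑ j ∈ ry.index, ∑ l ∈ (b₂ j).index,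
      𝑆 ((a₁ i).left k * ry.left j) *
        (((a₁ i).right k * (b₂ j).left l) * (𝑆 ((b₂ j).right l) * 𝑆 (rx.right i)))
      = ∑ i ∈ rx.index, ∑ k ∈ (a₁ i).index, ∑ j ∈ ry.index, ∑ l ∈ (b₁ j).index,
      𝑆 ((a₁ i).left k * (b₁ j).left l) *
        (((a₁ i).right k * (b₁ j).right l) * (𝑆 (ry.right j) * 𝑆 (rx.right i))) := by
    refine Finset.sum_congr rfl fun i _ => Finset.sum_congr rfl fun k _ => ?_
    have := hswy (𝑆 ∘ₗ LinearMap.mulLeft ℂ ((a₁ i).left k))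
      (LinearMap.mulLeft ℂ ((a₁ i).right k))
      (LinearMap.mulRight ℂ (𝑆 (rx.right i)) ∘ₗ 𝑆)
    simpa only [LinearMap.comp_apply, LinearMap.mulRight_apply,
      LinearMap.mulLeft_apply] using this
  have step4 : ∑ i ∈ rx.index, ∑ j ∈ ry.index, ∑ k ∈ (a₁ i).index, ∑ l ∈ (b₁ j).index,
      𝑆 ((a₁ i).left k * (b₁ j).left l) *
        (((a₁ i).right k * (b₁ j).right l) * (𝑆 (ry.right j) * 𝑆 (rx.right i)))
      = 𝑆 y * 𝑆 x := by
    calc ∑ i ∈ rx.index, ∑ j ∈ ry.index, ∑ k ∈ (a₁ i).index, ∑ l ∈ (b₁ j).index,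
        𝑆 ((a₁ i).left k * (b₁ j).left l) *
          (((a₁ i).right k * (b₁ j).right l) * (𝑆 (ry.right j) * 𝑆 (rx.right i)))
        = ∑ i ∈ rx.index, ∑ j ∈ ry.index,
            ((counit (R := ℂ) (rx.left i) : ℂ) * (counit (R := ℂ) (ry.left j) : ℂ)) •
              (𝑆 (ry.right j) * 𝑆 (rx.right i)) := by
          refine Finset.sum_congr rfl fun i _ => Finset.sum_congr rfl fun j _ => ?_
          have hre : (∑ k ∈ (a₁ i).index, ∑ l ∈ (b₁ j).index,
              𝑆 ((a₁ i).left k * (b₁ j).left l) *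
                (((a₁ i).right k * (b₁ j).right l) * (𝑆 (ry.right j) * 𝑆 (rx.right i))))
              = (∑ k ∈ (a₁ i).index, ∑ l ∈ (b₁ j).index,
              𝑆 ((a₁ i).left k * (b₁ j).left l) * ((a₁ i).right k * (b₁ j).right l)) *
                (𝑆 (ry.right j) * 𝑆 (rx.right i)) := by
            simp only [Finset.sum_mul]
            exact Finset.sum_congr rfl fun k _ => Finset.sum_congr rfl fun l _ =>
              (mul_assoc _ _ _).symm
          rw [hre, claimA (a₁ i) (b₁ j), smul_mul_assoc, one_mul]
      _ = 𝑆 y * 𝑆 x := by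
          have hx := congrArg 𝑆 (repr_sum_counit_smul rx)
          rw [map_sum] at hx
          simp only [map_smul] at hx
          have hy := congrArg 𝑆 (repr_sum_counit_smul ry)
          rw [map_sum] at hy
          simp only [map_smul] at hy
          rw [← hx, ← hy, Finset.sum_mul_sum]
          rw [Finset.sum_comm]
          refine Finset.sum_congr rfl fun j _ => Finset.sum_congr rfl fun i _ => ?_
          rw [smul_mul_smul_comm, mul_comm]
  refine step1.symm.trans ?_
  refine (sum4_comm rx.index ry.index _ _ _).trans ?_
  refine step2.trans ?_
  refine (sum4_comm rx.index ry.index _ _ _).symm.trans ?_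
  refine (Finset.sum_congr rfl fun i _ => Finset.sum_comm).trans ?_
  refine step3.trans ?_
  refine (Finset.sum_congr rfl fun i _ => Finset.sum_comm).trans ?_
  exact step4

theorem sinv_cop (Sinv : F →ₗ[ℂ] F)
    (hSinv₁ : ∀ a : F, Sinv (HopfAlgebra.antipode (R := ℂ) a) = a)
    (hSinv₂ : ∀ a : F, HopfAlgebra.antipode (R := ℂ) (Sinv a) = a)
    {a : F} {κ : Type*} (r : Coalgebra.Repr ℂ a κ) :
    ∑ i ∈ r.index, Sinv (r.right i) * r.left i = (counit (R := ℂ) a : ℂ) • (1 : F) := by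
  have hinj : Function.Injective 𝑆 := fun u v h => by rw [← hSinv₁ u, h, hSinv₁]
  apply hinj
  rw [map_sum, map_smul, my_antipode_one]
  rw [Finset.sum_congr rfl fun i (_ : i ∈ r.index) =>
    (show 𝑆 (Sinv (r.right i) * r.left i) = 𝑆 (r.left i) * r.right i by
      rw [antipode_antimul, hSinv₂])]
  exact HopfAlgebra.sum_antipode_mul_eq_smul (R := ℂ) r


theorem main_calc (π : F →ₗ[ℂ] K)
    (act : F →ₗ[ℂ] K →ₗ[ℂ] K)
    (hact_π : ∀ a b : F, act a (π b) = π (a * b))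
    (Sinv : F →ₗ[ℂ] F)
    (hSinv₁ : ∀ a : F, Sinv (HopfAlgebra.antipode (R := ℂ) a) = a)
    (hSinv₂ : ∀ a : F, HopfAlgebra.antipode (R := ℂ) (Sinv a) = a)
    {ι : Type*} [Fintype ι] (aMat : ι → ι → K) (Acomp : ι → F)
    (hA : ∀ i : ι, LinearMap.rTensor F π (Coalgebra.comul (Acomp i))
      = ∑ j : ι, aMat i j ⊗ₜ[ℂ] Acomp j) (i : ι) :
      ∑ j : ι, LinearMap.rTensor F ((act.flip (aMat i j)) ∘ₗ Sinv)
          (Coalgebra.comul (Acomp j))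
        = π 1 ⊗ₜ[ℂ] Acomp i := by
  classical
  set w : K ⊗[ℂ] F →ₗ[ℂ] K := TensorProduct.lift ((act ∘ₗ Sinv).flip) with hw
  set W : K ⊗[ℂ] F →ₗ[ℂ] K ⊗[ℂ] F :=
    LinearMap.rTensor F w ∘ₗ (TensorProduct.assoc ℂ K F F).symm.toLinearMap
      ∘ₗ LinearMap.lTensor K Coalgebra.comul with hW
  have W_tmul : ∀ (k : K) (y : F) (ry : Coalgebra.Repr ℂ y (F × F)),
      W (k ⊗ₜ y) = ∑ t ∈ ry.index, act (Sinv (ry.left t)) k ⊗ₜ[ℂ] ry.right t := by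
    intro k y ry
    rw [hW]
    simp only [LinearMap.comp_apply, LinearEquiv.coe_coe, LinearMap.lTensor_tmul]
    rw [← ry.eq, TensorProduct.tmul_sum, map_sum, map_sum]
    refine Finset.sum_congr rfl fun t _ => ?_
    simp only [TensorProduct.assoc_symm_tmul, LinearMap.rTensor_tmul, hw,
      TensorProduct.lift.tmul, LinearMap.flip_apply, LinearMap.comp_apply]
  have rj : ∀ j : ι, Coalgebra.Repr ℂ (Acomp j) (F × F) := fun j => Coalgebra.Repr.arbitrary ℂ _
  have key1 : ∑ j : ι, LinearMap.rTensor F ((act.flip (aMat i j)) ∘ₗ Sinv)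
      (Coalgebra.comul (Acomp j)) = W (∑ j : ι, aMat i j ⊗ₜ[ℂ] Acomp j) := by
    rw [map_sum]
    refine Finset.sum_congr rfl fun j _ => ?_
    rw [W_tmul (aMat i j) (Acomp j) (rj j), ← (rj j).eq, map_sum]
    simp only [LinearMap.rTensor_tmul, LinearMap.comp_apply, LinearMap.flip_apply]
  have ri : Coalgebra.Repr ℂ (Acomp i) (F × F) := Coalgebra.Repr.arbitrary ℂ _
  have rl : (s : F × F) → Coalgebra.Repr ℂ (ri.left s) (F × F) := fun s => Coalgebra.Repr.arbitrary ℂ _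
  have rr : (s : F × F) → Coalgebra.Repr ℂ (ri.right s) (F × F) := fun s => Coalgebra.Repr.arbitrary ℂ _
  have key2 : W (LinearMap.rTensor F π (Coalgebra.comul (Acomp i)))
      = ∑ s ∈ ri.index, ∑ t ∈ (rr s).index,
          π (Sinv ((rr s).left t) * ri.left s) ⊗ₜ[ℂ] (rr s).right t := by
    rw [← ri.eq, map_sum, map_sum]
    refine Finset.sum_congr rfl fun s _ => ?_
    rw [LinearMap.rTensor_tmul, W_tmul _ _ (rr s)]
    refine Finset.sum_congr rfl fun t _ => ?_
    rw [hact_π]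
  set q' : F ⊗[ℂ] F →ₗ[ℂ] K :=
    π ∘ₗ LinearMap.mul' ℂ F ∘ₗ LinearMap.rTensor F Sinv
      ∘ₗ (TensorProduct.comm ℂ F F).toLinearMap with hq
  set μ : F ⊗[ℂ] (F ⊗[ℂ] F) →ₗ[ℂ] K ⊗[ℂ] F :=
    LinearMap.rTensor F q' ∘ₗ (TensorProduct.assoc ℂ F F F).symm.toLinearMap with hμ
  have μ_tmul : ∀ u v z : F, μ (u ⊗ₜ (v ⊗ₜ z)) = π (Sinv v * u) ⊗ₜ[ℂ] z := by
    intro u v z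
    rw [hμ]
    simp only [LinearMap.comp_apply, LinearEquiv.coe_coe, TensorProduct.assoc_symm_tmul,
      LinearMap.rTensor_tmul, hq, TensorProduct.comm_tmul, LinearMap.mul'_apply]
  have hsw := congrArg μ (Coalgebra.sum_tmul_tmul_eq (R := ℂ) ri rl rr)
  simp only [map_sum, μ_tmul] at hsw
  calc (∑ j : ι, LinearMap.rTensor F ((act.flip (aMat i j)) ∘ₗ Sinv)
          (Coalgebra.comul (Acomp j)))
      = W (∑ j : ι, aMat i j ⊗ₜ[ℂ] Acomp j) := key1
    _ = W (LinearMap.rTensor F π (Coalgebra.comul (Acomp i))) := by rw [hA i]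
    _ = ∑ s ∈ ri.index, ∑ t ∈ (rr s).index,
          π (Sinv ((rr s).left t) * ri.left s) ⊗ₜ[ℂ] (rr s).right t := key2
    _ = ∑ s ∈ ri.index, ∑ t ∈ (rl s).index,
          π (Sinv ((rl s).right t) * (rl s).left t) ⊗ₜ[ℂ] ri.right s := hsw.symm
    _ = ∑ s ∈ ri.index, (counit (R := ℂ) (ri.left s) : ℂ) • (π 1 ⊗ₜ[ℂ] ri.right s) := by
        refine Finset.sum_congr rfl fun s _ => ?_
        rw [← TensorProduct.sum_tmul, ← map_sum, sinv_cop Sinv hSinv₁ hSinv₂ (rl s),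
          map_smul, TensorProduct.smul_tmul']
    _ = π 1 ⊗ₜ[ℂ] Acomp i := by
        simp only [← TensorProduct.tmul_smul]
        rw [← TensorProduct.tmul_sum, repr_sum_counit_smul ri]


/-- For `A = Σ_i e_i ⊗ A_i ∈ ind_K^G(ρ_R)`, i.e. `(π ⊗ id)(Δ A_i) = Σ_j a_{ij} ⊗ A_j`,
one has `Σ_j Σ_{(A_j)} S⁻¹((A_j)₍₁₎)·a_{ij} ⊗ (A_j)₍₂₎ = π(1) ⊗ A_i` in `K ⊗ F`. -/
theorem statement14 {ι : Type*} [Fintype ι]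
    (hcomul_star : ∀ (a : F) {κ : Type*} (r : Coalgebra.Repr ℂ a κ),
      Coalgebra.comul (star a) = ∑ i ∈ r.index, star (r.left i) ⊗ₜ[ℂ] star (r.right i))
    (hcounit_star : ∀ a : F, (Coalgebra.counit (star a) : ℂ) = starRingEnd ℂ (Coalgebra.counit a))
    (hSbij : Function.Bijective (HopfAlgebra.antipode (R := ℂ) (A := F)))
    (π : F →ₗ[ℂ] K) (hπsurj : Function.Surjective π)
    (hπcomul : ∀ a : F, Coalgebra.comul (π a) = TensorProduct.map π π (Coalgebra.comul a))
    (hπcounit : ∀ a : F, (Coalgebra.counit (π a) : ℂ) = (Coalgebra.counit a : ℂ))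
    (act : F →ₗ[ℂ] K →ₗ[ℂ] K)
    (hact_one : ∀ k : K, act 1 k = k)
    (hact_mul : ∀ (a b : F) (k : K), act (a * b) k = act a (act b k))
    (hact_π : ∀ a b : F, act a (π b) = π (a * b))
    (τK : K → K)
    (hτK_add : ∀ x y : K, τK (x + y) = τK x + τK y)
    (hτK_smul : ∀ (c : ℂ) (x : K), τK (c • x) = (starRingEnd ℂ) c • τK x)
    (hτK_π : ∀ a : F, τK (π a) = π (star (HopfAlgebra.antipode (R := ℂ) a)))
    (Sinv : F →ₗ[ℂ] F)
    (hSinv₁ : ∀ a : F, Sinv (HopfAlgebra.antipode (R := ℂ) a) = a)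
    (hSinv₂ : ∀ a : F, HopfAlgebra.antipode (R := ℂ) (Sinv a) = a)
    (ρR : V →ₗ[ℂ] V ⊗[ℂ] K)
    (hρ_counit : ∀ v : V,
      (TensorProduct.rid ℂ V) (LinearMap.lTensor V Coalgebra.counit (ρR v)) = v)
    (hρ_coassoc : ∀ v : V, (TensorProduct.assoc ℂ V K K) (LinearMap.rTensor K ρR (ρR v))
        = LinearMap.lTensor V Coalgebra.comul (ρR v))
    (b : Module.Basis ι ℂ V) (aMat : ι → ι → K)
    (hρmat : ∀ i : ι, ρR (b i) = ∑ j : ι, b j ⊗ₜ[ℂ] aMat j i)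
    (Acomp : ι → F)
    (hA : ∀ i : ι, LinearMap.rTensor F π (Coalgebra.comul (Acomp i))
      = ∑ j : ι, aMat i j ⊗ₜ[ℂ] Acomp j) :
    ∀ i : ι,
      ∑ j : ι, LinearMap.rTensor F ((act.flip (aMat i j)) ∘ₗ Sinv)
          (Coalgebra.comul (Acomp j))
        = π 1 ⊗ₜ[ℂ] Acomp i := by
  intro i
  exact main_calc π act hact_π Sinv hSinv₁ hSinv₂ aMat Acomp hA i
end
end

section
/- Let (K, π, τ_K) be a real coisotropic quantum left subgroup of F and ρ_R a unitary right corepresentation of K on the inner product space V with orthonormal basis {e_i} (unitarity: τ_K(a_{ij}) = a_{ji}). Then for all A = Σ_i e_i⊗A_i and B = Σ_i e_i⊗B_i in ind_K^G(ρ_R), the element ⟨A,B⟩_L := Σ_i A_i* B_i belongs to B_π. -/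
open scoped TensorProduct
open Coalgebra

noncomputable section

variable {F : Type*} [Ring F] [HopfAlgebra ℂ F] [StarRing F] [StarModule ℂ F]
variable {K : Type*} [AddCommGroup K] [Module ℂ K] [Coalgebra ℂ K]
variable {V : Type*} [AddCommGroup V] [Module ℂ V]

section ConjBil

variable {M N P : Type*} [AddCommGroup M] [Module ℂ M] [AddCommGroup N] [Module ℂ N]
  [AddCommGroup P] [Module ℂ P]

/-- Lift of a doubly conjugate-linear (balanced) map to the tensor product,
as an additive map. -/
def cbil (f : M → N → P)
    (ha : ∀ m m' n, f (m + m') n = f m n + f m' n)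
    (hb : ∀ m n n', f m (n + n') = f m n + f m n')
    (h₁ : ∀ (c : ℂ) (m : M) (n : N), f (c • m) n = (starRingEnd ℂ) c • f m n)
    (h₂ : ∀ (c : ℂ) (m : M) (n : N), f m (c • n) = (starRingEnd ℂ) c • f m n) :
    M ⊗[ℂ] N →+ P :=
  TensorProduct.liftAddHom
    (AddMonoidHom.mk' (fun m => AddMonoidHom.mk' (f m) (hb m))
      (fun m m' => AddMonoidHom.ext fun n => ha m m' n))
    (fun c m n => (h₁ c m n).trans (h₂ c m n).symm)

@[simp] lemma cbil_tmul (f : M → N → P) (ha hb h₁ h₂) (m : M) (n : N) :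
    cbil f ha hb h₁ h₂ (m ⊗ₜ[ℂ] n) = f m n := rfl

lemma cbil_smul (f : M → N → P) (ha hb h₁ h₂) (c : ℂ) (w : M ⊗[ℂ] N) :
    cbil f ha hb h₁ h₂ (c • w) = (starRingEnd ℂ) c • cbil f ha hb h₁ h₂ w := by
  induction w using TensorProduct.induction_on with
  | zero => simp
  | tmul m n => rw [TensorProduct.smul_tmul', cbil_tmul, cbil_tmul, h₁]
  | add x y hx hy =>
      rw [smul_add, map_add, map_add, hx, hy, smul_add]

end ConjBil

section Maps

/-- star of a complex scalar action. -/
lemma starF_smul (c : ℂ) (x : F) : star (c • x) = (starRingEnd ℂ) c • star x := by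
  rw [star_smul, starRingEnd_apply]

/-- `hatH π (x ⊗ y) = π (x*) ⊗ y*`. -/
def hatH (π : F →ₗ[ℂ] K) : F ⊗[ℂ] F →+ K ⊗[ℂ] F :=
  cbil (fun x y => π (star x) ⊗ₜ[ℂ] star y)
    (fun m m' n => by simp only [star_add, map_add, TensorProduct.add_tmul])
    (fun m n n' => by simp only [star_add, TensorProduct.tmul_add])
    (fun c m n => by simp only [starF_smul, map_smul, TensorProduct.smul_tmul'])
    (fun c m n => by simp only [starF_smul, TensorProduct.tmul_smul])

@[simp] lemma hatH_tmul (π : F →ₗ[ℂ] K) (x y : F) :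
    hatH π (x ⊗ₜ[ℂ] y) = π (star x) ⊗ₜ[ℂ] star y := rfl

/-- `hatGi act k (x ⊗ y) = (x* ▹ k) ⊗ y*`. -/
def hatGi (act : F →ₗ[ℂ] K →ₗ[ℂ] K) (k : K) : F ⊗[ℂ] F →+ K ⊗[ℂ] F :=
  cbil (fun x y => act (star x) k ⊗ₜ[ℂ] star y)
    (fun m m' n => by
      simp only [star_add, map_add, LinearMap.add_apply, TensorProduct.add_tmul])
    (fun m n n' => by simp only [star_add, TensorProduct.tmul_add])
    (fun c m n => by
      simp only [starF_smul, map_smul, LinearMap.smul_apply, TensorProduct.smul_tmul'])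
    (fun c m n => by simp only [starF_smul, TensorProduct.tmul_smul])

@[simp] lemma hatGi_tmul (act : F →ₗ[ℂ] K →ₗ[ℂ] K) (k : K) (x y : F) :
    hatGi act k (x ⊗ₜ[ℂ] y) = act (star x) k ⊗ₜ[ℂ] star y := rfl

lemma hatGi_add (act : F →ₗ[ℂ] K →ₗ[ℂ] K) (k k' : K) (w : F ⊗[ℂ] F) :
    hatGi act (k + k') w = hatGi act k w + hatGi act k' w := by
  induction w using TensorProduct.induction_on with
  | zero => simp
  | tmul x y => rw [hatGi_tmul, hatGi_tmul, hatGi_tmul, map_add, TensorProduct.add_tmul]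
  | add u v hu hv =>
      rw [map_add, map_add, map_add, hu, hv]
      abel

lemma hatGi_smulk (act : F →ₗ[ℂ] K →ₗ[ℂ] K) (c : ℂ) (k : K) (w : F ⊗[ℂ] F) :
    hatGi act (c • k) w = c • hatGi act k w := by
  induction w using TensorProduct.induction_on with
  | zero => simp
  | tmul x y => rw [hatGi_tmul, hatGi_tmul, map_smul, TensorProduct.smul_tmul']
  | add u v hu hv => rw [map_add, map_add, hu, hv, smul_add]

lemma hatGi_smulw (act : F →ₗ[ℂ] K →ₗ[ℂ] K) (k : K) (c : ℂ) (w : F ⊗[ℂ] F) :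
    hatGi act k (c • w) = (starRingEnd ℂ) c • hatGi act k w :=
  cbil_smul _ _ _ _ _ c w

/-- `hatG (k ⊗ a) = Σ (a₁* ▹ τK k) ⊗ a₂*`. -/
def hatG (act : F →ₗ[ℂ] K →ₗ[ℂ] K) (τK : K → K)
    (hτK_add : ∀ x y : K, τK (x + y) = τK x + τK y)
    (hτK_smul : ∀ (c : ℂ) (x : K), τK (c • x) = (starRingEnd ℂ) c • τK x) :
    K ⊗[ℂ] F →+ K ⊗[ℂ] F :=
  cbil (fun k a => hatGi act (τK k) (Coalgebra.comul a))
    (fun k k' a => by simp only [hτK_add, hatGi_add])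
    (fun k a a' => by simp only [map_add])
    (fun c k a => by simp only [hτK_smul, hatGi_smulk])
    (fun c k a => by simp only [map_smul, hatGi_smulw])

@[simp] lemma hatG_tmul (act : F →ₗ[ℂ] K →ₗ[ℂ] K) (τK : K → K)
    (hτK_add : ∀ x y : K, τK (x + y) = τK x + τK y)
    (hτK_smul : ∀ (c : ℂ) (x : K), τK (c • x) = (starRingEnd ℂ) c • τK x)
    (k : K) (a : F) :
    hatG act τK hτK_add hτK_smul (k ⊗ₜ[ℂ] a) = hatGi act (τK k) (Coalgebra.comul a) := rfl

end Maps

universe uR in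
/-- Reindex a representation through `Fin`, lifted to an arbitrary universe. -/
def reindexRepr {A : Type*} [AddCommMonoid A] [Module ℂ A] [CoalgebraStruct ℂ A] {a : A}
    {κ : Type*} (r : Coalgebra.Repr ℂ a κ) : Coalgebra.Repr ℂ a (ULift.{uR} (Fin r.index.card)) where
  index := Finset.univ
  left i := r.left (r.index.equivFin.symm i.down)
  right i := r.right (r.index.equivFin.symm i.down)
  eq := by
    rw [← r.eq, ← Finset.sum_attach r.index (fun x => r.left x ⊗ₜ[ℂ] r.right x)]
    exact Fintype.sum_equiv (Equiv.ulift.trans r.index.equivFin.symm) _ _ (fun i => rfl)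

/-- Sweedler identity `Σ S(a₁)a₂ ⊗ a₃ = 1 ⊗ a`, at the level of chosen representations. -/
lemma lambda_eq {κ κ₁ κ₂ : Type*} (a : F) (r : Coalgebra.Repr ℂ a κ)
    (r₁ : ∀ q : κ, Coalgebra.Repr ℂ (r.left q) κ₁)
    (r₂ : ∀ q : κ, Coalgebra.Repr ℂ (r.right q) κ₂) :
    ∑ q ∈ r.index, ∑ p ∈ (r₂ q).index,
      (HopfAlgebra.antipode (R := ℂ) (r.left q) * (r₂ q).left p) ⊗ₜ[ℂ] (r₂ q).right p
      = (1 : F) ⊗ₜ[ℂ] a := by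
  have ha2 : ∑ q ∈ r.index, Coalgebra.counit (R := ℂ) (r.left q) • r.right q = a := by
    have h := congrArg (TensorProduct.lid ℂ F) (Coalgebra.sum_counit_tmul_eq (R := ℂ) r)
    simpa only [map_sum, TensorProduct.lid_tmul, one_smul] using h
  have hco := Coalgebra.sum_tmul_tmul_eq r r₁ r₂
  have hmain := congrArg
    (fun w => (LinearMap.rTensor F (LinearMap.mul' ℂ F ∘ₗ
        LinearMap.rTensor F (HopfAlgebra.antipode (R := ℂ))) ∘ₗ
        (TensorProduct.assoc ℂ F F F).symm.toLinearMap) w) hco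
  simp only [map_sum, LinearMap.comp_apply, LinearEquiv.coe_coe,
    TensorProduct.assoc_symm_tmul, LinearMap.rTensor_tmul, LinearMap.mul'_apply] at hmain
  rw [← hmain]
  calc
    ∑ q ∈ r.index, ∑ j ∈ (r₁ q).index,
        (HopfAlgebra.antipode (R := ℂ) ((r₁ q).left j) * (r₁ q).right j) ⊗ₜ[ℂ] r.right q
      = ∑ q ∈ r.index,
          (∑ j ∈ (r₁ q).index,
            HopfAlgebra.antipode (R := ℂ) ((r₁ q).left j) * (r₁ q).right j) ⊗ₜ[ℂ] r.right q := by
        refine Finset.sum_congr rfl fun q _ => ?_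
        rw [TensorProduct.sum_tmul]
    _ = ∑ q ∈ r.index,
          (Coalgebra.counit (R := ℂ) (r.left q) • (1 : F)) ⊗ₜ[ℂ] r.right q := by
        refine Finset.sum_congr rfl fun q _ => ?_
        rw [HopfAlgebra.sum_antipode_mul_eq_smul (r₁ q)]
    _ = (1 : F) ⊗ₜ[ℂ] (∑ q ∈ r.index, Coalgebra.counit (R := ℂ) (r.left q) • r.right q) := by
        rw [TensorProduct.tmul_sum]
        refine Finset.sum_congr rfl fun q _ => ?_
        rw [TensorProduct.smul_tmul]
    _ = (1 : F) ⊗ₜ[ℂ] a := by rw [ha2]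

/-- For a unitary right corepresentation `ρ_R` of a left coisotropic quantum subgroup and
`A, B ∈ ind_K^G(ρ_R)`, the element `⟨A,B⟩_L = Σ_i A_i* B_i` lies in `B_π`. -/
theorem statement15 {ι : Type*} [Fintype ι]
    (hcomul_star : ∀ (a : F) {κ : Type*} (r : Coalgebra.Repr ℂ a κ),
      Coalgebra.comul (star a) = ∑ i ∈ r.index, star (r.left i) ⊗ₜ[ℂ] star (r.right i))
    (hcounit_star : ∀ a : F, (Coalgebra.counit (star a) : ℂ) = starRingEnd ℂ (Coalgebra.counit a))
    (hSbij : Function.Bijective (HopfAlgebra.antipode (R := ℂ) (A := F)))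
    (π : F →ₗ[ℂ] K) (hπsurj : Function.Surjective π)
    (hπcomul : ∀ a : F, Coalgebra.comul (π a) = TensorProduct.map π π (Coalgebra.comul a))
    (hπcounit : ∀ a : F, (Coalgebra.counit (π a) : ℂ) = (Coalgebra.counit a : ℂ))
    (act : F →ₗ[ℂ] K →ₗ[ℂ] K)
    (hact_one : ∀ k : K, act 1 k = k)
    (hact_mul : ∀ (a b : F) (k : K), act (a * b) k = act a (act b k))
    (hact_π : ∀ a b : F, act a (π b) = π (a * b))
    (τK : K → K)
    (hτK_add : ∀ x y : K, τK (x + y) = τK x + τK y)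
    (hτK_smul : ∀ (c : ℂ) (x : K), τK (c • x) = (starRingEnd ℂ) c • τK x)
    (hτK_π : ∀ a : F, τK (π a) = π (star (HopfAlgebra.antipode (R := ℂ) a)))
    (Sinv : F →ₗ[ℂ] F)
    (hSinv₁ : ∀ a : F, Sinv (HopfAlgebra.antipode (R := ℂ) a) = a)
    (hSinv₂ : ∀ a : F, HopfAlgebra.antipode (R := ℂ) (Sinv a) = a)
    (ρR : V →ₗ[ℂ] V ⊗[ℂ] K)
    (hρ_counit : ∀ v : V,
      (TensorProduct.rid ℂ V) (LinearMap.lTensor V Coalgebra.counit (ρR v)) = v)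
    (hρ_coassoc : ∀ v : V, (TensorProduct.assoc ℂ V K K) (LinearMap.rTensor K ρR (ρR v))
        = LinearMap.lTensor V Coalgebra.comul (ρR v))
    (b : Module.Basis ι ℂ V) (aMat : ι → ι → K)
    (hρmat : ∀ i : ι, ρR (b i) = ∑ j : ι, b j ⊗ₜ[ℂ] aMat j i)
    (hunit : ∀ i j : ι, τK (aMat i j) = aMat j i)
    (Acomp Bcomp : ι → F)
    (hA : ∀ i : ι, LinearMap.rTensor F π (Coalgebra.comul (Acomp i))
      = ∑ j : ι, aMat i j ⊗ₜ[ℂ] Acomp j)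
    (hB : ∀ i : ι, LinearMap.rTensor F π (Coalgebra.comul (Bcomp i))
      = ∑ j : ι, aMat i j ⊗ₜ[ℂ] Bcomp j) :
    (∑ i : ι, star (Acomp i) * Bcomp i) ∈ Bpi π := by
  classical
  -- the key "kappa" identity: for every a,
  -- hatG ((π ⊗ id)(Δ a)) = π 1 ⊗ star a
  have hkappa : ∀ a : F,
      hatG act τK hτK_add hτK_smul (LinearMap.rTensor F π (Coalgebra.comul a))
        = π 1 ⊗ₜ[ℂ] star a := by
    intro a
    set r : Coalgebra.Repr ℂ a (F × F) := ℛ ℂ a with hr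
    set r₂ : ∀ q : F × F, Coalgebra.Repr ℂ (r.right q) (F × F) := fun q => ℛ ℂ (r.right q) with hr₂
    have h1 : LinearMap.rTensor F π (Coalgebra.comul a)
        = ∑ q ∈ r.index, π (r.left q) ⊗ₜ[ℂ] r.right q := by
      rw [← r.eq, map_sum]
      simp
    rw [h1, map_sum]
    have h2 : ∀ q ∈ r.index,
        hatG act τK hτK_add hτK_smul (π (r.left q) ⊗ₜ[ℂ] r.right q)
          = ∑ p ∈ (r₂ q).index,
              hatH π ((HopfAlgebra.antipode (R := ℂ) (r.left q) * (r₂ q).left p)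
                ⊗ₜ[ℂ] (r₂ q).right p) := by
      intro q _
      rw [hatG_tmul, ← (r₂ q).eq, map_sum]
      refine Finset.sum_congr rfl fun p _ => ?_
      rw [hatGi_tmul, hatH_tmul, hτK_π, hact_π, ← star_mul]
    rw [Finset.sum_congr rfl h2]
    simp only [← map_sum]
    rw [lambda_eq a r (fun q => ℛ ℂ (r.left q)) r₂, hatH_tmul, star_one]
  -- the unitarity step: for each j
  have hstar : ∀ j : ι,
      (∑ i : ι, hatGi act (aMat i j) (Coalgebra.comul (Acomp i)))
        = π 1 ⊗ₜ[ℂ] star (Acomp j) := by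
    intro j
    have : ∀ i : ι, hatGi act (aMat i j) (Coalgebra.comul (Acomp i))
        = hatG act τK hτK_add hτK_smul (aMat j i ⊗ₜ[ℂ] Acomp i) := by
      intro i
      rw [hatG_tmul, hunit]
    rw [Finset.sum_congr rfl fun i _ => this i, ← map_sum, ← hA j, hkappa]
  -- pointwise multiplication lemma
  have L1 : ∀ (x y : F) (w : F ⊗[ℂ] F),
      LinearMap.rTensor F π ((x ⊗ₜ[ℂ] y) * w)
        = TensorProduct.map (act x) (LinearMap.mulLeft ℂ y) (LinearMap.rTensor F π w) := by
    intro x y w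
    induction w using TensorProduct.induction_on with
    | zero => simp
    | tmul u v =>
        rw [Algebra.TensorProduct.tmul_mul_tmul, LinearMap.rTensor_tmul,
          LinearMap.rTensor_tmul, TensorProduct.map_tmul, LinearMap.mulLeft_apply, hact_π]
    | add u v hu hv => rw [mul_add, map_add, map_add, map_add, hu, hv]
  -- now the main computation
  rw [Bpi, LinearMap.mem_ker, LinearMap.sub_apply, sub_eq_zero, LinearMap.comp_apply]
  set rA : ∀ i : ι, Coalgebra.Repr ℂ (Acomp i) (ULift.{u_5} (Fin (ℛ ℂ (Acomp i)).index.card)) :=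
    fun i => reindexRepr (ℛ ℂ (Acomp i)) with hrA
  calc
    LinearMap.rTensor F π (Coalgebra.comul (∑ i : ι, star (Acomp i) * Bcomp i))
      = ∑ i : ι, LinearMap.rTensor F π
          (Coalgebra.comul (star (Acomp i)) * Coalgebra.comul (Bcomp i)) := by
        rw [map_sum, map_sum]
        refine Finset.sum_congr rfl fun i _ => ?_
        rw [Bialgebra.comul_mul]
    _ = ∑ i : ι, ∑ p ∈ (rA i).index, ∑ j : ι,
          act (star ((rA i).left p)) (aMat i j) ⊗ₜ[ℂ] (star ((rA i).right p) * Bcomp j) := by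
        refine Finset.sum_congr rfl fun i _ => ?_
        rw [hcomul_star (Acomp i) (rA i), Finset.sum_mul, map_sum]
        refine Finset.sum_congr rfl fun p _ => ?_
        rw [L1, hB i, map_sum]
        refine Finset.sum_congr rfl fun j _ => ?_
        rw [TensorProduct.map_tmul, LinearMap.mulLeft_apply]
    _ = ∑ j : ι, ∑ i : ι, ∑ p ∈ (rA i).index,
          act (star ((rA i).left p)) (aMat i j) ⊗ₜ[ℂ] (star ((rA i).right p) * Bcomp j) := by
        rw [Finset.sum_comm]
        refine Finset.sum_congr rfl fun j _ => Finset.sum_comm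
    _ = ∑ j : ι, LinearMap.lTensor K (LinearMap.mulRight ℂ (Bcomp j))
          (∑ i : ι, hatGi act (aMat i j) (Coalgebra.comul (Acomp i))) := by
        refine Finset.sum_congr rfl fun j _ => ?_
        rw [map_sum]
        refine Finset.sum_congr rfl fun i _ => ?_
        rw [← (rA i).eq, map_sum, map_sum]
        refine Finset.sum_congr rfl fun p _ => ?_
        rw [hatGi_tmul, LinearMap.lTensor_tmul, LinearMap.mulRight_apply]
    _ = ∑ j : ι, π 1 ⊗ₜ[ℂ] (star (Acomp j) * Bcomp j) := by
        refine Finset.sum_congr rfl fun j _ => ?_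
        rw [hstar j, LinearMap.lTensor_tmul, LinearMap.mulRight_apply]
    _ = (TensorProduct.mk ℂ K F) (π 1) (∑ i : ι, star (Acomp i) * Bcomp i) := by
        rw [TensorProduct.mk_apply, TensorProduct.tmul_sum]
end
end
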